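/- arXiv:0710.4114 — 9 statements merged into one kernel-verified Lean document; each statement's English description precedes it below -/
import Mathlib

section
/- Assume Ω > 2/√3 and set ω = Ω. Then for p = 1 the quadratic σ² + (Ω²p² − Ω² − 2)σ + 1 = 0 has the double root σ = 1, while for every nonnegative integer p ≠ 1 every complex root of σ² + (Ω²p² − Ω² − 2)σ + 1 = 0 has modulus different from 1. -/
/-- At the lower phonon band edge ω = Ω, under the nonresonance condition Ω > 2/√3,
the dispersion quadratic has the double root 1 for p = 1 and no root on the unit
circle for p ≠ 1. -/
theorem stmt_1 (Ω : ℝ) (hΩ : 2 / Real.sqrt 3 < Ω) :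
    (∀ z : ℂ, z ^ 2 + ((Ω ^ 2 * (1 : ℝ) ^ 2 - Ω ^ 2 - 2 : ℝ) : ℂ) * z + 1 = (z - 1) ^ 2) ∧
    (∀ p : ℕ, p ≠ 1 →
      ∀ z : ℂ, z ^ 2 + ((Ω ^ 2 * (p : ℝ) ^ 2 - Ω ^ 2 - 2 : ℝ) : ℂ) * z + 1 = 0 →
        ‖z‖ ≠ 1) := by
  have hs3 : (0:ℝ) < Real.sqrt 3 := Real.sqrt_pos.mpr (by norm_num)
  have hs3sq : (Real.sqrt 3) ^ 2 = 3 := Real.sq_sqrt (by norm_num)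
  have hΩpos : 0 < Ω := lt_trans (by positivity) hΩ
  have hΩsq : 4 / 3 < Ω ^ 2 := by
    have h : 2 < Ω * Real.sqrt 3 := by
      rw [div_lt_iff₀ hs3] at hΩ; linarith
    nlinarith [sq_nonneg (Ω * Real.sqrt 3 - 2)]
  constructor
  · intro z
    push_cast
    ring
  · intro p hp z hz habs
    set b : ℝ := Ω ^ 2 * (p : ℝ) ^ 2 - Ω ^ 2 - 2 with hb
    -- |b| > 2
    have hbgt : 2 < |b| := by
      rcases Nat.lt_or_ge p 1 with h1 | h1
      · interval_cases p
        · have : b = -Ω ^ 2 - 2 := by simp [hb]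
          rw [this, abs_of_neg (by nlinarith)]
          nlinarith
      · have h2 : 2 ≤ p := by omega
        have hp2 : (2:ℝ) ≤ (p:ℝ) := by exact_mod_cast h2
        have : (4:ℝ) ≤ (p:ℝ)^2 := by nlinarith
        have hbpos : 2 < b := by
          have : Ω ^ 2 * (p:ℝ)^2 - Ω ^ 2 ≥ 3 * Ω ^ 2 := by nlinarith
          simp only [hb]; nlinarith
        rw [abs_of_pos (by linarith)]; exact hbpos
    -- from |z| = 1 and the equation, b = -(z + conj z), so |b| ≤ 2
    have hz0 : z ≠ 0 := by
      intro h; rw [h] at habs; simp at habs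
    have hconj : (starRingEnd ℂ) z = z⁻¹ := by
      have h1 : z * (starRingEnd ℂ) z = 1 := by
        rw [Complex.mul_conj, ← Complex.sq_norm, habs]; norm_num
      exact (inv_eq_of_mul_eq_one_right h1).symm
    have hsum : (b : ℂ) = -(z + (starRingEnd ℂ) z) := by
      rw [hconj]
      have h2 : ((b : ℂ) + (z + z⁻¹)) * z = 0 := by
        rw [add_mul, add_mul, inv_mul_cancel₀ hz0]
        linear_combination hz
      rcases mul_eq_zero.mp h2 with h | h
      · linear_combination h
      · exact absurd h hz0
    have hre : b = -(2 * z.re) := by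
      have h := congrArg Complex.re hsum
      simp [Complex.add_re, Complex.conj_re] at h
      linarith

    have hrele : |z.re| ≤ 1 := by
      have := Complex.abs_re_le_norm z
      rwa [habs] at this
    have : |b| ≤ 2 := by
      rw [hre, abs_neg]
      rw [abs_mul]
      rw [abs_of_nonneg (by norm_num : (0:ℝ) ≤ 2)] at *
      linarith [abs_nonneg z.re]
    linarith
end

section
/- Fix Ω > 0, 0 < ω < Ω, B ∈ ℝ, m₀ ∈ ℝ, and set μ = ω² − Ω² < 0. Then there exists a not-identically-zero sequence (β_n)_{n∈ℤ} of real numbers satisfying β_{n+1} − 2β_n + β_{n−1} = −(ω² m₀ δ_{n,0} + μ) β_n + B β_n³ for all n ∈ ℤ with β_n → 0 as n → ±∞, if and only if the set W^s ∩ A(ω,m₀)·W^u contains a nonzero point, where A(ω,m₀) is the matrix [[1,0],[−ω²m₀,1]]. -/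
/-- The defect recurrence β_{n+1} − 2β_n + β_{n−1} = −(ω²m₀δ_{n0} + μ)β_n + Bβ_n³
has a nontrivial homoclinic orbit to 0 iff the stable manifold W^s of the
homogeneous map G meets the image of its unstable manifold W^u under the linear
shear A(ω,m₀) = [[1,0],[−ω²m₀,1]] at a nonzero point. -/
theorem stmt_4 (Ω ω B m₀ : ℝ) (hΩ : 0 < Ω) (hω : 0 < ω) (hωΩ : ω < Ω) :
    let μ : ℝ := ω ^ 2 - Ω ^ 2
    let G : ℝ × ℝ → ℝ × ℝ := fun U => (U.2, -U.1 + (2 - μ) * U.2 + B * U.2 ^ 3)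
    let Ws : Set (ℝ × ℝ) :=
      {U | Filter.Tendsto (fun n : ℕ => G^[n] U) Filter.atTop (nhds 0)}
    let Wu : Set (ℝ × ℝ) :=
      {U | ∃ V : ℤ → ℝ × ℝ, V 0 = U ∧ (∀ k : ℤ, k ≤ 0 → V k = G (V (k - 1))) ∧
        Filter.Tendsto V Filter.atBot (nhds 0)}
    let A : ℝ × ℝ → ℝ × ℝ := fun U => (U.1, -(ω ^ 2 * m₀) * U.1 + U.2)
    ((∃ β : ℤ → ℝ, (∃ n, β n ≠ 0) ∧
        (∀ n : ℤ, β (n + 1) - 2 * β n + β (n - 1) =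
          -(ω ^ 2 * m₀ * (if n = 0 then 1 else 0) + μ) * β n + B * β n ^ 3) ∧
        Filter.Tendsto β Filter.atTop (nhds 0) ∧
        Filter.Tendsto β Filter.atBot (nhds 0)) ↔
      ∃ U : ℝ × ℝ, U ≠ 0 ∧ U ∈ Ws ∩ A '' Wu) := by
  intro μ G Ws Wu A
  have hGfst : ∀ W : ℝ × ℝ, (G W).1 = W.2 := fun _ => rfl
  have hGsnd : ∀ W : ℝ × ℝ, (G W).2 = -W.1 + (2 - μ) * W.2 + B * W.2 ^ 3 := fun _ => rfl
  have hGcont : Continuous G := by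
    simp only [G]; fun_prop
  have hG0 : G 0 = 0 := by
    simp only [G, Prod.fst_zero, Prod.snd_zero]
    norm_num
  constructor
  · rintro ⟨β, ⟨n₀, hn₀⟩, hrec, htop, hbot⟩
    have hrec' : ∀ n : ℤ, n ≠ 0 → β (n + 1) = -β (n - 1) + (2 - μ) * β n + B * β n ^ 3 := by
      intro n hn
      have h := hrec n
      rw [if_neg hn] at h
      ring_nf at h ⊢
      linarith
    have hrec0 : β 1 = -(ω ^ 2 * m₀) * β 0 + (-β (-1) + (2 - μ) * β 0 + B * β 0 ^ 3) := by
      have h := hrec 0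
      rw [if_pos rfl] at h
      norm_num at h
      ring_nf at h ⊢
      linarith
    -- nontriviality of (β 0, β 1)
    have hU0 : ((β 0, β 1) : ℝ × ℝ) ≠ 0 := by
      intro h
      have h0 : β 0 = 0 := congrArg Prod.fst h
      have h1 : β 1 = 0 := congrArg Prod.snd h
      have hup : ∀ n : ℤ, 0 ≤ n → β n = 0 ∧ β (n + 1) = 0 := by
        refine Int.le_induction ⟨h0, h1⟩ ?_
        intro n hn ih
        refine ⟨ih.2, ?_⟩
        have h := hrec (n + 1)
        rw [show n + 1 - 1 = n by ring] at h
        rw [ih.1, ih.2] at h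
        simpa using h
      have hdown : ∀ n : ℤ, n ≤ 0 → β n = 0 ∧ β (n + 1) = 0 := by
        refine Int.le_induction_down ⟨h0, h1⟩ ?_
        intro n hn ih
        refine ⟨?_, by rw [show n - 1 + 1 = n by ring]; exact ih.1⟩
        have h := hrec n
        rw [ih.1, ih.2] at h
        simpa using h
      rcases le_or_gt 0 n₀ with h | h
      · exact hn₀ (hup n₀ h).1
      · exact hn₀ (hdown n₀ h.le).1
    -- iterate identity
    have hiter : ∀ k : ℕ, G^[k] (β 0, β 1) = (β (k : ℤ), β ((k : ℤ) + 1)) := by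
      intro k
      induction k with
      | zero => simp
      | succ k ih =>
        rw [Function.iterate_succ_apply', ih]
        have h := hrec' ((k : ℤ) + 1) (by omega)
        rw [show (k : ℤ) + 1 - 1 = k by ring] at h
        apply Prod.ext
        · rw [hGfst]; push_cast; ring_nf
        · rw [hGsnd]; push_cast [h]; ring_nf
    have hWs : ((β 0, β 1) : ℝ × ℝ) ∈ Ws := by
      simp only [Ws, Set.mem_setOf_eq]
      have hc : Filter.Tendsto (fun k : ℕ => (k : ℤ)) Filter.atTop Filter.atTop :=
        tendsto_natCast_atTop_atTop
      have hc1 : Filter.Tendsto (fun k : ℕ => (k : ℤ) + 1) Filter.atTop Filter.atTop :=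
        Filter.tendsto_atTop_add_const_right _ 1 hc
      have h1 : Filter.Tendsto (fun k : ℕ => β (k : ℤ)) Filter.atTop (nhds 0) := htop.comp hc
      have h2 : Filter.Tendsto (fun k : ℕ => β ((k : ℤ) + 1)) Filter.atTop (nhds 0) :=
        htop.comp hc1
      have := h1.prodMk_nhds h2
      rw [show ((0 : ℝ), (0 : ℝ)) = (0 : ℝ × ℝ) from rfl] at this
      exact this.congr fun k => (hiter k).symm
    refine ⟨(β 0, β 1), hU0, hWs, G (β (-1), β 0), ?_, ?_⟩
    · -- membership in Wu
      simp only [Wu, Set.mem_setOf_eq]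
      refine ⟨fun k => G (β (k - 1), β k), by norm_num, ?_, ?_⟩
      · intro k hk
        have h := hrec' (k - 1) (by omega)
        have hinner : G (β (k - 1 - 1), β (k - 1)) = (β (k - 1), β k) := by
          apply Prod.ext
          · rw [hGfst]
          · rw [hGsnd]
            rw [show k - 1 + 1 = k by ring] at h
            linarith
        show G (β (k - 1), β k) = G (G (β (k - 1 - 1), β (k - 1)))
        rw [hinner]
      · have hc : Filter.Tendsto (fun k : ℤ => k - 1) Filter.atBot Filter.atBot :=
          Filter.tendsto_atBot_add_const_right _ (-1) Filter.tendsto_id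
        have h1 : Filter.Tendsto (fun k : ℤ => β (k - 1)) Filter.atBot (nhds 0) := hbot.comp hc
        have hpair : Filter.Tendsto (fun k : ℤ => ((β (k - 1), β k) : ℝ × ℝ))
            Filter.atBot (nhds 0) := by
          have := h1.prodMk_nhds hbot
          rwa [show ((0 : ℝ), (0 : ℝ)) = (0 : ℝ × ℝ) from rfl] at this
        have := (hGcont.tendsto 0).comp hpair
        rwa [hG0] at this
    · -- A (G (β (-1), β 0)) = (β 0, β 1)
      show A (G (β (-1), β 0)) = (β 0, β 1)
      simp only [A, G]
      rw [Prod.mk.injEq]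
      exact ⟨rfl, hrec0.symm⟩
  · rintro ⟨U, hU0, hUs, W, hWu, hAW⟩
    simp only [Ws, Set.mem_setOf_eq] at hUs
    simp only [Wu, Set.mem_setOf_eq] at hWu
    obtain ⟨V, hV0, hVrec, hVbot⟩ := hWu
    have hAW1 : W.1 = U.1 := by rw [← hAW]
    have hAW2 : -(ω ^ 2 * m₀) * W.1 + W.2 = U.2 := by rw [← hAW]
    set β : ℤ → ℝ := fun n => if 0 ≤ n then (G^[n.toNat] U).1 else (V n).1 with hβ
    have hβnat : ∀ k : ℕ, β (k : ℤ) = (G^[k] U).1 := by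
      intro k
      simp [hβ, Int.toNat_natCast]
    have hUiter : ∀ k : ℕ, G^[k] U = (β (k : ℤ), β ((k : ℤ) + 1)) := by
      intro k
      apply Prod.ext
      · rw [hβnat]
      · have : ((k : ℤ) + 1) = ((k + 1 : ℕ) : ℤ) := by push_cast; ring
        rw [this, hβnat (k + 1), Function.iterate_succ_apply', hGfst]
    have hVfst : ∀ k : ℤ, k ≤ 0 → (V k).1 = β k := by
      intro k hk
      rcases eq_or_lt_of_le hk with h | h
      · subst h
        rw [hV0]
        have : β 0 = U.1 := by simpa using hβnat 0
        rw [this, ← hAW1]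
      · simp [hβ, not_le.mpr h]
    have hVpair : ∀ k : ℤ, k ≤ 0 → V (k - 1) = (β (k - 1), β k) := by
      intro k hk
      apply Prod.ext
      · exact hVfst (k - 1) (by omega)
      · have h := hVrec k hk
        have : (V k).1 = (V (k - 1)).2 := by rw [h, hGfst]
        rw [← this]
        exact hVfst k hk
    have hβ0 : β 0 = U.1 := by simpa using hβnat 0
    have hβ1 : β 1 = U.2 := by
      have := hβnat 1
      simpa [hGfst] using this
    refine ⟨β, ?_, ?_, ?_, ?_⟩
    · -- nontrivial
      by_contra h
      push_neg at h
      apply hU0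
      have h0 := h 0
      have h1 := h 1
      rw [hβ0] at h0; rw [hβ1] at h1
      exact Prod.ext h0 h1
    · -- recurrence
      intro n
      rcases lt_trichotomy n 0 with hn | hn | hn
      · -- n ≤ -1
        rw [if_neg (by omega)]
        have h1 := hVpair n hn.le
        have h2 := hVpair (n + 1) (by omega)
        rw [show n + 1 - 1 = n by ring] at h2
        have h3 := hVrec n hn.le
        rw [h1] at h3
        have : β (n + 1) = -β (n - 1) + (2 - μ) * β n + B * β n ^ 3 := by
          have := congrArg Prod.snd h3
          rw [h2, hGsnd] at this
          simpa using this
        rw [this]; ring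
      · -- n = 0
        subst hn
        rw [if_pos rfl]
        have h1 := hVpair 0 le_rfl
        have h3 := hVrec 0 le_rfl
        rw [h1] at h3
        have hW : W.2 = -β (0 - 1) + (2 - μ) * β 0 + B * β 0 ^ 3 := by
          have := congrArg Prod.snd h3
          rw [hV0] at this
          rw [this, hGsnd]
        rw [hAW1, ← hβ0] at hAW2
        rw [hW] at hAW2
        rw [show (0 : ℤ) + 1 = 1 by ring, hβ1, ← hAW2]
        norm_num
        ring
      · -- n ≥ 1
        rw [if_neg (by omega)]
        obtain ⟨k, rfl⟩ : ∃ k : ℕ, n = (k : ℤ) + 1 := ⟨(n - 1).toNat, by omega⟩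
        have h := hUiter (k + 1)
        rw [Function.iterate_succ_apply', hUiter k] at h
        have h2 := congrArg Prod.snd h
        rw [hGsnd] at h2
        push_cast at h2
        have : β ((k : ℤ) + 1 + 1) = -β (k : ℤ) + (2 - μ) * β ((k : ℤ) + 1)
            + B * β ((k : ℤ) + 1) ^ 3 := by
          simpa using h2.symm
        rw [show (k : ℤ) + 1 - 1 = (k : ℤ) by ring, this]
        ring
    · -- tendsto atTop
      have htoNat : Filter.Tendsto Int.toNat Filter.atTop Filter.atTop := by
        apply Filter.tendsto_atTop_atTop.mpr
        intro b
        exact ⟨(b : ℤ), fun a ha => by omega⟩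
      have h1 : Filter.Tendsto (fun n : ℤ => (G^[n.toNat] U).1) Filter.atTop (nhds 0) := by
        have := (continuous_fst.tendsto (0 : ℝ × ℝ)).comp (hUs.comp htoNat)
        simpa [Function.comp_def] using this
      apply h1.congr'
      filter_upwards [Filter.eventually_ge_atTop (0 : ℤ)] with n hn
      simp [hβ, hn]
    · -- tendsto atBot
      have h1 : Filter.Tendsto (fun n : ℤ => (V n).1) Filter.atBot (nhds 0) := by
        have := (continuous_fst.tendsto (0 : ℝ × ℝ)).comp hVbot
        simpa [Function.comp_def] using this
      apply h1.congr'
      filter_upwards [Filter.eventually_le_atBot (-1 : ℤ)] with n hn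
      simp [hβ, show ¬ (0 ≤ n) by omega]
end

section
/- Fix Ω > 0 and 0 < ω < Ω, set μ = ω² − Ω², σ = 1 − μ/2 − (1/2)√(μ² − 4μ) (so that 0 < σ < 1 and σ + σ^{−1} = 2 − μ), and m_l(ω) = (σ^{−1} − σ)/ω². Consider the linear recurrence β_{n+1} − 2β_n + β_{n−1} = −(ω² m₀ δ_{n,0} + μ) β_n, n ∈ ℤ. If m₀ = m_l(ω), then a real sequence (β_n)_{n∈ℤ} solves this recurrence with β_n → 0 as n → ±∞ if and only if there exists c ∈ ℝ with β_n = c σ^{|n|} for all n. If m₀ ≠ m_l(ω), then the only solution with β_n → 0 as n → ±∞ is the zero sequence. -/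
open Filter

private lemma geom_of_decay (σ : ℝ) (hσ0 : 0 < σ) (hσ1 : σ < 1) (u : ℕ → ℝ)
    (hrec : ∀ n, u (n + 2) = (σ + σ⁻¹) * u (n + 1) - u n)
    (ht : Tendsto u atTop (nhds 0)) : ∀ n, u n = u 0 * σ ^ n := by
  have hσne : σ ≠ 0 := ne_of_gt hσ0
  set γ : ℕ → ℝ := fun n => u (n + 1) - σ * u n with hγ
  have hstep : ∀ n, γ (n + 1) = σ⁻¹ * γ n := by
    intro n
    simp only [hγ]
    rw [hrec]
    field_simp
    ring
  have hpow : ∀ n, γ n = σ⁻¹ ^ n * γ 0 := by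
    intro n
    induction n with
    | zero => simp
    | succ k ih => rw [hstep, ih, pow_succ]; ring
  have hγt : Tendsto γ atTop (nhds 0) := by
    have h1 : Tendsto (fun n => u (n + 1)) atTop (nhds 0) :=
      ht.comp (tendsto_add_atTop_nat 1)
    have h2 := h1.sub (ht.const_mul σ)
    simpa using h2
  have h1le : (1 : ℝ) ≤ σ⁻¹ := by
    rw [le_inv_comm₀ one_pos hσ0]
    simpa using hσ1.le
  have hγ0 : γ 0 = 0 := by
    by_contra h
    have hle : ∀ n, |γ 0| ≤ |γ n| := by
      intro n
      rw [hpow n, abs_mul, abs_pow]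
      have habs : (1 : ℝ) ≤ |σ⁻¹| := by rwa [abs_of_pos (by positivity)]
      have h1 : (1 : ℝ) ≤ |σ⁻¹| ^ n := one_le_pow₀ habs
      nlinarith [abs_nonneg (γ 0)]
    have hto : Tendsto (fun n => |γ n|) atTop (nhds 0) := by
      simpa using hγt.abs
    have : |γ 0| ≤ 0 := ge_of_tendsto' hto hle
    exact h (abs_eq_zero.mp (le_antisymm this (abs_nonneg _)))
  have hzero : ∀ n, u (n + 1) = σ * u n := by
    intro n
    have h := hpow n
    rw [hγ0, mul_zero] at h
    simp only [hγ] at h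
    linarith
  intro n
  induction n with
  | zero => simp
  | succ k ih => rw [hzero, ih, pow_succ]; ring

private lemma forward_sol (σ μ : ℝ) (hσ0 : 0 < σ) (hσ1 : σ < 1)
    (hsum : σ + σ⁻¹ = 2 - μ) (β : ℤ → ℝ)
    (hrec : ∀ n : ℤ, n ≠ 0 → β (n + 1) - 2 * β n + β (n - 1) = -μ * β n)
    (ht : Tendsto β atTop (nhds 0)) (hb : Tendsto β atBot (nhds 0)) :
    ∀ n : ℤ, β n = β 0 * σ ^ n.natAbs := by
  have hu : ∀ n : ℕ, β (n : ℤ) = β 0 * σ ^ n := by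
    have := geom_of_decay σ hσ0 hσ1 (fun k => β (k : ℤ)) ?_ ?_
    · simpa using this
    · intro n
      have h := hrec ((n : ℤ) + 1) (by omega)
      rw [show ((n : ℤ) + 1) - 1 = ((n : ℕ) : ℤ) by push_cast; ring,
        show ((n : ℤ) + 1) + 1 = ((n + 2 : ℕ) : ℤ) by push_cast; ring,
        show ((n : ℤ) + 1) = ((n + 1 : ℕ) : ℤ) by push_cast; ring] at h
      show β ((n + 2 : ℕ) : ℤ) = (σ + σ⁻¹) * β ((n + 1 : ℕ) : ℤ) - β ((n : ℕ) : ℤ)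
      rw [hsum]
      linarith
    · exact ht.comp tendsto_natCast_atTop_atTop
  have hv : ∀ n : ℕ, β (-(n : ℤ)) = β 0 * σ ^ n := by
    have := geom_of_decay σ hσ0 hσ1 (fun k => β (-(k : ℤ))) ?_ ?_
    · simpa using this
    · intro n
      have h := hrec (-(n : ℤ) - 1) (by omega)
      rw [show (-(n : ℤ) - 1) + 1 = -((n : ℕ) : ℤ) by push_cast; ring] at h
      rw [show (-(n : ℤ) - 1) - 1 = -((n + 2 : ℕ) : ℤ) by push_cast; ring] at h
      rw [show (-(n : ℤ) - 1) = -((n + 1 : ℕ) : ℤ) by push_cast; ring] at h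
      show β (-((n + 2 : ℕ) : ℤ)) = (σ + σ⁻¹) * β (-((n + 1 : ℕ) : ℤ)) - β (-((n : ℕ) : ℤ))
      rw [hsum]
      linarith
    · refine hb.comp ?_
      exact tendsto_neg_atBot_iff.mpr tendsto_natCast_atTop_atTop
  intro n
  rcases le_or_gt 0 n with hn | hn
  · have h := hu n.toNat
    rw [Int.toNat_of_nonneg hn] at h
    rw [show n.natAbs = n.toNat by omega]
    exact h
  · have h := hv n.natAbs
    rw [show -((n.natAbs : ℕ) : ℤ) = n by omega] at h
    exact h

private lemma natAbs_tendsto_atTop : Tendsto Int.natAbs atTop atTop := by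
  rw [tendsto_atTop_atTop]
  intro b
  exact ⟨(b : ℤ), fun a ha => by omega⟩

private lemma natAbs_tendsto_atBot : Tendsto Int.natAbs atBot atTop := by
  rw [tendsto_atBot_atTop]
  intro b
  exact ⟨-(b : ℤ), fun a ha => by omega⟩

/-- Linear localized (impurity) modes of the linear defect recurrence:
with σ the stable root of σ² − (2−μ)σ + 1 = 0 and m_l(ω) = (σ⁻¹ − σ)/ω²,
decaying solutions exist iff m₀ = m_l(ω), in which case they are exactly
the multiples of σ^{|n|}. -/
theorem stmt_5 (Ω ω m₀ : ℝ) (hΩ : 0 < Ω) (hω : 0 < ω) (hωΩ : ω < Ω) :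
    let μ : ℝ := ω ^ 2 - Ω ^ 2
    let σ : ℝ := 1 - μ / 2 - Real.sqrt (μ ^ 2 - 4 * μ) / 2
    let ml : ℝ := (σ⁻¹ - σ) / ω ^ 2
    (0 < σ ∧ σ < 1 ∧ σ + σ⁻¹ = 2 - μ) ∧
    (m₀ = ml →
      ∀ β : ℤ → ℝ,
        ((∀ n : ℤ, β (n + 1) - 2 * β n + β (n - 1) =
            -(ω ^ 2 * m₀ * (if n = 0 then 1 else 0) + μ) * β n) ∧
          Filter.Tendsto β Filter.atTop (nhds 0) ∧
          Filter.Tendsto β Filter.atBot (nhds 0)) ↔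
        ∃ c : ℝ, ∀ n : ℤ, β n = c * σ ^ n.natAbs) ∧
    (m₀ ≠ ml →
      ∀ β : ℤ → ℝ,
        ((∀ n : ℤ, β (n + 1) - 2 * β n + β (n - 1) =
            -(ω ^ 2 * m₀ * (if n = 0 then 1 else 0) + μ) * β n) ∧
          Filter.Tendsto β Filter.atTop (nhds 0) ∧
          Filter.Tendsto β Filter.atBot (nhds 0)) →
        ∀ n : ℤ, β n = 0) := by
  intro μ σ ml
  have hμdef : μ = ω ^ 2 - Ω ^ 2 := rfl
  have hμneg : μ < 0 := by rw [hμdef]; nlinarith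
  have hsq : Real.sqrt (μ ^ 2 - 4 * μ) ^ 2 = μ ^ 2 - 4 * μ :=
    Real.sq_sqrt (by nlinarith)
  have hsnn : 0 ≤ Real.sqrt (μ ^ 2 - 4 * μ) := Real.sqrt_nonneg _
  have hσdef : σ = 1 - μ / 2 - Real.sqrt (μ ^ 2 - 4 * μ) / 2 := rfl
  have hσ0 : 0 < σ := by rw [hσdef]; nlinarith
  have hσ1 : σ < 1 := by rw [hσdef]; nlinarith
  have hσne : σ ≠ 0 := ne_of_gt hσ0
  have hquad : σ ^ 2 + 1 = (2 - μ) * σ := by rw [hσdef]; nlinarith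
  have hsum : σ + σ⁻¹ = 2 - μ := by
    field_simp
    nlinarith [hquad]
  have hωne : (ω : ℝ) ^ 2 ≠ 0 := by positivity
  have hmldef : ml = (σ⁻¹ - σ) / ω ^ 2 := rfl
  have hmlω : ω ^ 2 * ml = σ⁻¹ - σ := by rw [hmldef]; field_simp
  -- recurrence away from 0
  have hoff : ∀ β : ℤ → ℝ,
      (∀ n : ℤ, β (n + 1) - 2 * β n + β (n - 1) =
        -(ω ^ 2 * m₀ * (if n = 0 then 1 else 0) + μ) * β n) →
      ∀ n : ℤ, n ≠ 0 → β (n + 1) - 2 * β n + β (n - 1) = -μ * β n := by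
    intro β hrec n hn
    have h := hrec n
    rw [if_neg hn] at h
    simpa using h
  refine ⟨⟨hσ0, hσ1, hsum⟩, ?_, ?_⟩
  · -- case m₀ = ml
    intro hm β
    constructor
    · rintro ⟨hrec, ht, hb⟩
      exact ⟨β 0, forward_sol σ μ hσ0 hσ1 hsum β (hoff β hrec) ht hb⟩
    · rintro ⟨c, hc⟩
      refine ⟨?_, ?_, ?_⟩
      · intro n
        rcases lt_trichotomy n 0 with hn | hn | hn
        · set k : ℕ := (-n - 1).toNat with hk
          have hnk : n = -(k : ℤ) - 1 := by omega
          have e1 : (n + 1).natAbs = k := by omega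
          have e2 : n.natAbs = k + 1 := by omega
          have e3 : (n - 1).natAbs = k + 2 := by omega
          rw [hc, hc, hc, e1, e2, e3, if_neg (by omega : n ≠ 0)]
          linear_combination (c * σ ^ k) * hquad
        · subst hn
          have e1 : ((0 : ℤ) + 1).natAbs = 1 := by omega
          have e2 : ((0 : ℤ)).natAbs = 0 := by omega
          have e3 : ((0 : ℤ) - 1).natAbs = 1 := by omega
          rw [hc, hc, hc, e1, e2, e3, if_pos rfl, hm]
          have h1 : ω ^ 2 * ml * 1 + μ = σ⁻¹ - σ + μ := by rw [← hmlω]; ring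
          rw [h1]
          have hinv : σ * σ⁻¹ = 1 := mul_inv_cancel₀ hσne
          have : σ⁻¹ = 2 - μ - σ := by linarith [hsum]
          rw [this]
          ring
        · set k : ℕ := (n - 1).toNat with hk
          have hnk : n = (k : ℤ) + 1 := by omega
          have e1 : (n + 1).natAbs = k + 2 := by omega
          have e2 : n.natAbs = k + 1 := by omega
          have e3 : (n - 1).natAbs = k := by omega
          rw [hc, hc, hc, e1, e2, e3, if_neg (by omega : n ≠ 0)]
          linear_combination (c * σ ^ k) * hquad
      · have h0 : Tendsto (fun k : ℕ => c * σ ^ k) atTop (nhds 0) := by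
          have := tendsto_pow_atTop_nhds_zero_of_lt_one hσ0.le hσ1
          simpa using this.const_mul c
        have : Tendsto β atTop (nhds 0) := by
          have hcomp := h0.comp natAbs_tendsto_atTop
          refine hcomp.congr ?_
          intro n
          simp [Function.comp, hc n]
        exact this
      · have h0 : Tendsto (fun k : ℕ => c * σ ^ k) atTop (nhds 0) := by
          have := tendsto_pow_atTop_nhds_zero_of_lt_one hσ0.le hσ1
          simpa using this.const_mul c
        have hcomp := h0.comp natAbs_tendsto_atBot
        refine hcomp.congr ?_
        intro n
        simp [Function.comp, hc n]
  · -- case m₀ ≠ ml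
    intro hm β h n
    obtain ⟨hrec, ht, hb⟩ := h
    have hform := forward_sol σ μ hσ0 hσ1 hsum β (hoff β hrec) ht hb
    have hβ0 : β 0 = 0 := by
      have h0 := hrec 0
      rw [if_pos rfl] at h0
      have e1 : β (0 + 1) = β 0 * σ := by
        rw [hform (0 + 1)]; norm_num
      have e2 : β (0 - 1) = β 0 * σ := by
        rw [hform (0 - 1)]; norm_num
      rw [e1, e2] at h0
      -- h0 : β 0 * σ - 2 * β 0 + β 0 * σ = -(ω^2*m₀*1 + μ) * β 0
      have hfac : β 0 * (ω ^ 2 * m₀ - ω ^ 2 * ml) = 0 := by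
        have hinv : σ⁻¹ = 2 - μ - σ := by linarith [hsum]
        rw [hmlω, hinv]
        nlinarith [h0]
      have hne : ω ^ 2 * m₀ - ω ^ 2 * ml ≠ 0 := by
        intro hcon
        apply hm
        have : ω ^ 2 * (m₀ - ml) = 0 := by linarith
        rcases mul_eq_zero.mp this with h | h
        · exact absurd h hωne
        · linarith
      exact (mul_eq_zero.mp hfac).resolve_right hne
    rw [hform n, hβ0, zero_mul]
end

section
/- Fix Ω > 0 and m₀ > 0. For ω ∈ (0,Ω) set μ = ω² − Ω² and m_l(ω) = √(μ² − 4μ)/ω². Then for ω ∈ (0,Ω), the equality m_l(ω) = m₀ holds if and only if ω² = (Ω² + 2 − √(4 + m₀² Ω² (Ω² + 4)))/(1 − m₀²) when m₀ ≠ 1, and if and only if ω² = (Ω² + 2)/2 − 2/(Ω² + 2) when m₀ = 1. In particular this determines a unique frequency ω_l(m₀) ∈ (0,Ω) of the linear defect mode. -/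
private lemma sq_eq_of_nonneg {a b : ℝ} (ha : 0 ≤ a) (hb : 0 ≤ b) (h : a ^ 2 = b ^ 2) :
    a = b := by
  rw [← Real.sqrt_sq ha, ← Real.sqrt_sq hb, h]

/-- Frequency ω_l(m₀) of the linear defect mode: for ω ∈ (0,Ω), the critical mass
defect m_l(ω) = √(μ² − 4μ)/ω² equals m₀ iff ω² is given by the explicit formulas,
which determine a unique frequency ω_l(m₀) ∈ (0,Ω). -/
theorem stmt_6 (Ω m₀ : ℝ) (hΩ : 0 < Ω) (hm₀ : 0 < m₀) :
    let ml : ℝ → ℝ := fun ω =>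
      Real.sqrt ((ω ^ 2 - Ω ^ 2) ^ 2 - 4 * (ω ^ 2 - Ω ^ 2)) / ω ^ 2
    (∀ ω : ℝ, 0 < ω → ω < Ω →
      ((m₀ ≠ 1 → (ml ω = m₀ ↔
          ω ^ 2 = (Ω ^ 2 + 2 - Real.sqrt (4 + m₀ ^ 2 * Ω ^ 2 * (Ω ^ 2 + 4))) /
            (1 - m₀ ^ 2))) ∧
        (m₀ = 1 → (ml ω = m₀ ↔ ω ^ 2 = (Ω ^ 2 + 2) / 2 - 2 / (Ω ^ 2 + 2))))) ∧
    (∃! ω : ℝ, (0 < ω ∧ ω < Ω) ∧ ml ω = m₀) := by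
  intro ml
  -- S and its square
  set S : ℝ := Real.sqrt (4 + m₀ ^ 2 * Ω ^ 2 * (Ω ^ 2 + 4)) with hSdef
  have hSnn : 0 ≤ S := Real.sqrt_nonneg _
  have hS2 : S ^ 2 = 4 + m₀ ^ 2 * Ω ^ 2 * (Ω ^ 2 + 4) := Real.sq_sqrt (by positivity)
  -- central equivalence: ml ω = m₀ ↔ quadratic in ω² vanishes
  have hkey : ∀ ω : ℝ, 0 < ω → ω < Ω →
      (ml ω = m₀ ↔
        (1 - m₀ ^ 2) * (ω ^ 2) ^ 2 - (2 * Ω ^ 2 + 4) * ω ^ 2 + Ω ^ 2 * (Ω ^ 2 + 4) = 0) := by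
    intro ω hω hωΩ
    have hx2 : (0:ℝ) < ω ^ 2 := by positivity
    have hxΩ : ω ^ 2 < Ω ^ 2 := by nlinarith
    have hA : 0 ≤ (ω ^ 2 - Ω ^ 2) ^ 2 - 4 * (ω ^ 2 - Ω ^ 2) := by nlinarith
    show Real.sqrt ((ω ^ 2 - Ω ^ 2) ^ 2 - 4 * (ω ^ 2 - Ω ^ 2)) / ω ^ 2 = m₀ ↔ _
    rw [div_eq_iff (ne_of_gt hx2)]
    constructor
    · intro h
      have h2 := Real.sq_sqrt hA
      rw [h] at h2
      nlinarith [h2]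
    · intro h
      have hA' : (ω ^ 2 - Ω ^ 2) ^ 2 - 4 * (ω ^ 2 - Ω ^ 2) = (m₀ * ω ^ 2) ^ 2 := by
        nlinarith [h]
      rw [hA', Real.sqrt_sq (by positivity)]
  -- the quadratic-root characterization for m₀ ≠ 1
  have hroot : ∀ x : ℝ, m₀ ≠ 1 → 0 < x → x < Ω ^ 2 →
      ((1 - m₀ ^ 2) * x ^ 2 - (2 * Ω ^ 2 + 4) * x + Ω ^ 2 * (Ω ^ 2 + 4) = 0 ↔
        x = (Ω ^ 2 + 2 - S) / (1 - m₀ ^ 2)) := by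
    intro x hm1 hx0 hxΩ
    have hc : (1 : ℝ) - m₀ ^ 2 ≠ 0 := by
      intro h
      have h2 : (m₀ - 1) * (m₀ + 1) = 0 := by linarith [sq_nonneg m₀]; 
      rcases mul_eq_zero.mp h2 with h3 | h3
      · exact hm1 (by linarith)
      · linarith
    constructor
    · intro hq
      have hpos : 0 < Ω ^ 2 + 2 - (1 - m₀ ^ 2) * x := by nlinarith [sq_nonneg m₀]
      have hsq : (Ω ^ 2 + 2 - (1 - m₀ ^ 2) * x) ^ 2 = S ^ 2 := by
        rw [hS2]; linear_combination (1 - m₀ ^ 2) * hq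
      have hSx : S = Ω ^ 2 + 2 - (1 - m₀ ^ 2) * x :=
        sq_eq_of_nonneg hSnn hpos.le hsq.symm
      rw [eq_div_iff hc]
      linarith
    · intro hx
      have hcx : (1 - m₀ ^ 2) * x = Ω ^ 2 + 2 - S := by
        rw [hx]; field_simp
      have h0 : (1 - m₀ ^ 2) *
          ((1 - m₀ ^ 2) * x ^ 2 - (2 * Ω ^ 2 + 4) * x + Ω ^ 2 * (Ω ^ 2 + 4)) = 0 := by
        linear_combination ((1 - m₀ ^ 2) * x + (Ω ^ 2 + 2 - S) - (2 * Ω ^ 2 + 4)) * hcx + hS2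
      exact (mul_eq_zero.mp h0).resolve_left hc
  -- the linear-root characterization for m₀ = 1
  have hroot1 : ∀ x : ℝ, m₀ = 1 →
      ((1 - m₀ ^ 2) * x ^ 2 - (2 * Ω ^ 2 + 4) * x + Ω ^ 2 * (Ω ^ 2 + 4) = 0 ↔
        x = (Ω ^ 2 + 2) / 2 - 2 / (Ω ^ 2 + 2)) := by
    intro x hm1
    subst hm1
    have h2 : (0:ℝ) < Ω ^ 2 + 2 := by positivity
    constructor
    · intro hq
      field_simp
      ring_nf
      ring_nf at hq
      nlinarith [hq]
    · intro hx
      rw [hx]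
      field_simp
      ring
  -- main pointwise statement
  have hmain : ∀ ω : ℝ, 0 < ω → ω < Ω →
      ((m₀ ≠ 1 → (ml ω = m₀ ↔
          ω ^ 2 = (Ω ^ 2 + 2 - S) / (1 - m₀ ^ 2))) ∧
        (m₀ = 1 → (ml ω = m₀ ↔ ω ^ 2 = (Ω ^ 2 + 2) / 2 - 2 / (Ω ^ 2 + 2)))) := by
    intro ω hω hωΩ
    have hxΩ : ω ^ 2 < Ω ^ 2 := by nlinarith
    refine ⟨fun hm1 => ?_, fun hm1 => ?_⟩
    · exact (hkey ω hω hωΩ).trans (hroot (ω ^ 2) hm1 (by positivity) hxΩ)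
    · exact (hkey ω hω hωΩ).trans (hroot1 (ω ^ 2) hm1)
  refine ⟨hmain, ?_⟩
  -- existence via IVT
  obtain ⟨x, hx, hfx⟩ : ∃ x ∈ Set.Ioo (0:ℝ) (Ω ^ 2),
      (1 - m₀ ^ 2) * x ^ 2 - (2 * Ω ^ 2 + 4) * x + Ω ^ 2 * (Ω ^ 2 + 4) = 0 := by
    have hcont : ContinuousOn
        (fun x : ℝ => (1 - m₀ ^ 2) * x ^ 2 - (2 * Ω ^ 2 + 4) * x + Ω ^ 2 * (Ω ^ 2 + 4))
        (Set.Icc 0 (Ω ^ 2)) := by fun_prop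
    have hsub := intermediate_value_Ioo' (by positivity : (0:ℝ) ≤ Ω ^ 2) hcont
    have h0mem : (0:ℝ) ∈ Set.Ioo
        ((1 - m₀ ^ 2) * (Ω ^ 2) ^ 2 - (2 * Ω ^ 2 + 4) * Ω ^ 2 + Ω ^ 2 * (Ω ^ 2 + 4))
        ((1 - m₀ ^ 2) * (0:ℝ) ^ 2 - (2 * Ω ^ 2 + 4) * 0 + Ω ^ 2 * (Ω ^ 2 + 4)) := by
      constructor
      · nlinarith [mul_pos (pow_pos hm₀ 2) (pow_pos hΩ 4)]
      · nlinarith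
    obtain ⟨x, hx, hfx⟩ := hsub h0mem
    exact ⟨x, hx, hfx⟩
  set ω₀ : ℝ := Real.sqrt x with hw0
  have hω₀2 : ω₀ ^ 2 = x := Real.sq_sqrt hx.1.le
  have hω₀pos : 0 < ω₀ := Real.sqrt_pos.mpr hx.1
  have hω₀lt : ω₀ < Ω := by
    rw [hw0]
    exact (Real.sqrt_lt' hΩ).mpr hx.2
  have hml : ml ω₀ = m₀ := by
    rw [hkey ω₀ hω₀pos hω₀lt, hω₀2]
    exact hfx
  refine ⟨ω₀, ⟨⟨hω₀pos, hω₀lt⟩, hml⟩, ?_⟩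
  rintro ω' ⟨⟨h1, h2⟩, h3⟩
  have hsqeq : ω' ^ 2 = ω₀ ^ 2 := by
    by_cases hm1 : m₀ = 1
    · have ha := ((hmain ω' h1 h2).2 hm1).mp h3
      have hb := ((hmain ω₀ hω₀pos hω₀lt).2 hm1).mp hml
      rw [ha, hb]
    · have ha := ((hmain ω' h1 h2).1 hm1).mp h3
      have hb := ((hmain ω₀ hω₀pos hω₀lt).1 hm1).mp hml
      rw [ha, hb]
  exact sq_eq_of_nonneg h1.le hω₀pos.le hsqeq
end

section
/- Fix Ω > 0, 0 < ω < Ω, B > 0, and m₀ ≤ 0, and set μ = ω² − Ω² < 0. Then the only sequence (β_n)_{n∈ℤ} of real numbers satisfying β_{n+1} − 2β_n + β_{n−1} = −(ω² m₀ δ_{n,0} + μ) β_n + B β_n³ for all n ∈ ℤ with β_n → 0 as n → ±∞ is the zero sequence. In particular (taking m₀ = 0) the homogeneous truncated recurrence β_{n+1} − 2β_n + β_{n−1} = −μ β_n + B β_n³ has no nontrivial homoclinic orbit to 0 when B > 0 and μ < 0. -/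
/-- For a hard potential (B > 0) and a nonpositive mass defect m₀ ≤ 0, the only
homoclinic orbit to 0 of the truncated defect recurrence is the zero sequence. -/
theorem stmt_7 (Ω ω B m₀ : ℝ) (hΩ : 0 < Ω) (hω : 0 < ω) (hωΩ : ω < Ω)
    (hB : 0 < B) (hm₀ : m₀ ≤ 0) (β : ℤ → ℝ)
    (hrec : ∀ n : ℤ, β (n + 1) - 2 * β n + β (n - 1) =
      -(ω ^ 2 * m₀ * (if n = 0 then 1 else 0) + (ω ^ 2 - Ω ^ 2)) * β n + B * β n ^ 3)
    (htop : Filter.Tendsto β Filter.atTop (nhds 0))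
    (hbot : Filter.Tendsto β Filter.atBot (nhds 0)) :
    ∀ n : ℤ, β n = 0 := by
  by_contra h
  push_neg at h
  obtain ⟨k, hk⟩ := h
  have hM : 0 < |β k| := abs_pos.mpr hk
  have h1 : ∀ᶠ n in Filter.atTop, |β n| < |β k| := by
    have := htop.eventually (Metric.ball_mem_nhds (0 : ℝ) hM)
    simpa [Real.dist_eq] using this
  have h2 : ∀ᶠ n in Filter.atBot, |β n| < |β k| := by
    have := hbot.eventually (Metric.ball_mem_nhds (0 : ℝ) hM)
    simpa [Real.dist_eq] using this
  obtain ⟨a, ha⟩ := Filter.eventually_atTop.mp h1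
  obtain ⟨b, hb⟩ := Filter.eventually_atBot.mp h2
  have hka : k < a := by
    by_contra hc; push_neg at hc
    exact absurd (ha k hc) (lt_irrefl _)
  have hkb : b < k := by
    by_contra hc; push_neg at hc
    exact absurd (hb k hc) (lt_irrefl _)
  have hkmem : k ∈ Finset.Icc b a := Finset.mem_Icc.mpr ⟨hkb.le, hka.le⟩
  obtain ⟨n₀, hn₀mem, hn₀max⟩ :=
    Finset.exists_max_image (Finset.Icc b a) (fun n => |β n|) ⟨k, hkmem⟩
  have hmax : ∀ m, |β m| ≤ |β n₀| := by
    intro m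
    by_cases hm : m ∈ Finset.Icc b a
    · exact hn₀max m hm
    · have hMle : |β k| ≤ |β n₀| := hn₀max k hkmem
      rw [Finset.mem_Icc] at hm
      push_neg at hm
      rcases lt_or_ge m b with h' | h'
      · exact (hb m h'.le).le.trans hMle
      · exact (ha m (hm h').le).le.trans hMle
  have hx : β n₀ ≠ 0 := by
    intro h0
    have := hmax k
    rw [h0, abs_zero] at this
    exact absurd (hM.trans_le this) (lt_irrefl 0)
  set x := β n₀ with hxdef
  set D : ℝ := -(ω ^ 2 * m₀ * (if n₀ = 0 then 1 else 0)) + (Ω ^ 2 - ω ^ 2) with hDdef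
  have hD : 0 < D := by
    have h1 : 0 ≤ -(ω ^ 2 * m₀ * (if n₀ = 0 then 1 else 0)) := by
      rcases eq_or_ne n₀ 0 with h0 | h0 <;> simp [h0] <;> nlinarith [sq_nonneg ω, hω]
    have h2 : 0 < Ω ^ 2 - ω ^ 2 := by nlinarith
    linarith
  have hr := hrec n₀
  have key : β (n₀ + 1) + β (n₀ - 1) = x * (2 + D + B * x ^ 2) := by
    rw [hDdef]; ring_nf; ring_nf at hr; linarith
  have hfac : 2 < 2 + D + B * x ^ 2 := by
    have : 0 < B * x ^ 2 := mul_pos hB (pow_pos (abs_pos.mpr hx) 2 |>.trans_eq (by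
      rw [sq_abs]))
    linarith
  have habs : |β (n₀ + 1) + β (n₀ - 1)| ≤ 2 * |x| := by
    calc |β (n₀ + 1) + β (n₀ - 1)| ≤ |β (n₀ + 1)| + |β (n₀ - 1)| := abs_add_le _ _
    _ ≤ 2 * |x| := by have := hmax (n₀ + 1); have := hmax (n₀ - 1); linarith
  have hgt : 2 * |x| < |β (n₀ + 1) + β (n₀ - 1)| := by
    rw [key, abs_mul, abs_of_pos (by linarith : (0:ℝ) < 2 + D + B * x ^ 2)]
    have hax : 0 < |x| := abs_pos.mpr hx
    nlinarith
  linarith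
end

section
/- Fix Ω > 0, 0 < ω < Ω, B > 0, and set μ = ω² − Ω² < 0. Let (β_n)_{n∈ℤ} be a real sequence, not identically zero, satisfying β_{n+1} − 2β_n + β_{n−1} = −μ β_n + B β_n³ for all n ∈ ℤ and β_n → 0 as n → −∞. Then for every n ∈ ℤ one has |β_n| > |β_{n−1}| > 0. -/
/-- For a hard potential (B > 0), every nontrivial orbit of the homogeneous
truncated recurrence tending to 0 as n → −∞ (i.e. lying on the unstable
manifold) grows strictly in absolute value: |β_n| > |β_{n−1}| > 0. -/
theorem stmt_8 (Ω ω B : ℝ) (hΩ : 0 < Ω) (hω : 0 < ω) (hωΩ : ω < Ω) (hB : 0 < B)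
    (β : ℤ → ℝ)
    (hrec : ∀ n : ℤ, β (n + 1) - 2 * β n + β (n - 1) =
      -(ω ^ 2 - Ω ^ 2) * β n + B * β n ^ 3)
    (hne : ∃ n, β n ≠ 0)
    (hbot : Filter.Tendsto β Filter.atBot (nhds 0)) :
    ∀ n : ℤ, 0 < |β (n - 1)| ∧ |β (n - 1)| < |β n| := by
  set c : ℝ := Ω ^ 2 - ω ^ 2 with hcdef
  have hc : 0 < c := by nlinarith
  -- key inequality from the recurrence
  have key : ∀ n : ℤ, (2 + c) * |β n| ≤ |β (n - 1)| + |β (n + 1)| := by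
    intro n
    have h := hrec n
    have hsum : β (n - 1) + β (n + 1) = (2 + c) * β n + B * β n ^ 3 := by
      rw [hcdef]; linarith
    have h1 : (2 + c) * |β n| ≤ |(2 + c) * β n + B * β n ^ 3| := by
      rcases abs_cases (β n) with ⟨he, hs⟩ | ⟨he, hs⟩
      · have h3 : 0 ≤ B * β n * β n ^ 2 :=
          mul_nonneg (mul_nonneg hB.le hs) (sq_nonneg _)
        rw [he, abs_of_nonneg (by nlinarith)]; nlinarith
      · have h3 : B * β n * β n ^ 2 ≤ 0 :=
          mul_nonpos_of_nonpos_of_nonneg (by nlinarith) (sq_nonneg _)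
        rw [he, abs_of_nonpos (by nlinarith)]; nlinarith
    calc (2 + c) * |β n| ≤ |(2 + c) * β n + B * β n ^ 3| := h1
      _ = |β (n - 1) + β (n + 1)| := by rw [hsum]
      _ ≤ |β (n - 1)| + |β (n + 1)| := abs_add_le _ _
  -- one backward monotonicity step
  have mono : ∀ m : ℤ, |β m| ≤ |β (m - 1)| →
      (1 + c) * |β (m - 1)| ≤ |β (m - 2)| ∧ |β (m - 1)| ≤ |β (m - 2)| := by
    intro m hm
    have hk := key (m - 1)
    have e1 : m - 1 - 1 = m - 2 := by ring
    have e2 : m - 1 + 1 = m := by ring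
    rw [e1, e2] at hk
    have ha := abs_nonneg (β (m - 1))
    constructor <;> nlinarith
  -- iterated backward growth
  have iter : ∀ m : ℤ, |β m| ≤ |β (m - 1)| → ∀ k : ℕ,
      (1 + c) ^ k * |β (m - 1)| ≤ |β (m - 1 - k)| ∧ |β (m - k)| ≤ |β (m - 1 - k)| := by
    intro m hm k
    induction k with
    | zero => simpa using hm
    | succ k ih =>
      obtain ⟨h1, h2⟩ := ih
      have hm' := mono (m - k) (by
        have e : m - (k : ℤ) - 1 = m - 1 - k := by ring
        rw [e]; exact h2)
      have e1 : m - (k : ℤ) - 1 = m - 1 - (k : ℤ) := by ring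
      have e2 : m - (k : ℤ) - 2 = m - 1 - ((k : ℕ) + 1 : ℕ) := by push_cast; ring
      rw [e1, e2] at hm'
      have e3 : m - ((k : ℕ) + 1 : ℕ) = m - 1 - (k : ℤ) := by push_cast; ring
      rw [e3]
      refine ⟨?_, hm'.2⟩
      have step : (1 + c) * ((1 + c) ^ k * |β (m - 1)|) ≤ (1 + c) * |β (m - 1 - k)| :=
        mul_le_mul_of_nonneg_left h1 (by linarith)
      calc (1 + c) ^ (k + 1) * |β (m - 1)|
          = (1 + c) * ((1 + c) ^ k * |β (m - 1)|) := by ring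
        _ ≤ (1 + c) * |β (m - 1 - k)| := step
        _ ≤ |β (m - 1 - ((k : ℕ) + 1 : ℕ))| := hm'.1
  -- decay at -∞ gives a uniform bound on a tail
  obtain ⟨N, hN⟩ : ∃ N : ℤ, ∀ n ≤ N, |β n| ≤ 1 := by
    have h := (Metric.tendsto_nhds.mp hbot) 1 one_pos
    rw [Filter.eventually_atBot] at h
    obtain ⟨N, hN⟩ := h
    refine ⟨N, fun n hn => ?_⟩
    have := hN n hn
    rw [Real.dist_eq, sub_zero] at this
    linarith
  -- if the absolute value ever fails to grow, the previous term is 0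
  have zlem : ∀ m : ℤ, |β m| ≤ |β (m - 1)| → β (m - 1) = 0 := by
    intro m hm
    by_contra h0
    have hpos : 0 < |β (m - 1)| := abs_pos.mpr h0
    obtain ⟨k0, hk0⟩ := pow_unbounded_of_one_lt (1 / |β (m - 1)|)
      (by linarith : (1 : ℝ) < 1 + c)
    set k : ℕ := max k0 (m - 1 - N).toNat with hk
    have hge : (1 + c) ^ k0 ≤ (1 + c) ^ k :=
      pow_le_pow_right₀ (by linarith) (le_max_left _ _)
    have hkN : m - 1 - (k : ℤ) ≤ N := by
      have h' : (m - 1 - N).toNat ≤ k := le_max_right _ _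
      omega
    have h1 := (iter m hm k).1
    have h2 := hN _ hkN
    have hlt : 1 < (1 + c) ^ k * |β (m - 1)| := by
      rw [div_lt_iff₀ hpos] at hk0
      nlinarith
    linarith
  -- two consecutive zeros force the whole orbit to vanish
  have allzero : ∀ m : ℤ, β m = 0 → β (m - 1) = 0 → ∀ n, β n = 0 := by
    intro m h0 h1 n
    have fwd : ∀ j : ℕ, β (m + j) = 0 ∧ β (m + j - 1) = 0 := by
      intro j
      induction j with
      | zero => simpa using ⟨h0, h1⟩
      | succ j ih =>
        obtain ⟨ha, hb⟩ := ih
        have hr := hrec (m + j)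
        rw [ha, hb] at hr
        norm_num at hr
        have e1 : m + ((j : ℕ) + 1 : ℕ) = m + (j : ℤ) + 1 := by push_cast; ring
        rw [e1]
        refine ⟨hr, ?_⟩
        have e2 : m + (j : ℤ) + 1 - 1 = m + (j : ℤ) := by ring
        rw [e2]; exact ha
    have bwd : ∀ j : ℕ, β (m - j) = 0 ∧ β (m - j - 1) = 0 := by
      intro j
      induction j with
      | zero => simpa using ⟨h0, h1⟩
      | succ j ih =>
        obtain ⟨ha, hb⟩ := ih
        have hr := hrec (m - j - 1)
        have e0 : m - (j : ℤ) - 1 + 1 = m - j := by ring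
        rw [e0, ha, hb] at hr
        norm_num at hr
        have e1 : m - ((j : ℕ) + 1 : ℕ) = m - (j : ℤ) - 1 := by push_cast; ring
        rw [e1]
        exact ⟨hb, hr⟩
    rcases le_or_gt m n with h | h
    · have e : m + ((n - m).toNat : ℤ) = n := by omega
      have := (fwd (n - m).toNat).1
      rwa [e] at this
    · have e : m - ((m - n).toNat : ℤ) = n := by omega
      have := (bwd (m - n).toNat).1
      rwa [e] at this
  -- conclusion
  intro n
  obtain ⟨p, hp⟩ := hne
  constructor
  · by_contra h
    push_neg at h
    have h0 : β (n - 1) = 0 := by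
      have := abs_nonneg (β (n - 1))
      have : |β (n - 1)| = 0 := le_antisymm h this
      exact abs_eq_zero.mp this
    have hz : β (n - 1 - 1) = 0 := by
      apply zlem (n - 1)
      rw [h0]
      simpa using abs_nonneg (β (n - 1 - 1))
    exact hp (allzero (n - 1) h0 hz p)
  · by_contra h
    push_neg at h
    have h0 : β (n - 1) = 0 := zlem n h
    have hn0 : β n = 0 := by
      have : |β n| ≤ 0 := by rw [h0] at h; simpa using h
      exact abs_eq_zero.mp (le_antisymm this (abs_nonneg _))
    exact hp (allzero n hn0 h0 p)
end

section
/- Fix Ω > 0, 0 < ω < Ω, B > 0, m₀ ∈ ℝ, and set μ = ω² − Ω² < 0. Let (β_n)_{n∈ℤ} be a real sequence satisfying β_{n+1} − 2β_n + β_{n−1} = −(ω² m₀ δ_{n,0} + μ) β_n + B β_n³ for all n ∈ ℤ with β_n → 0 as n → ±∞. Then β_{−n} = β_n for all n ∈ ℤ, i.e. every homoclinic orbit to 0 of this defect recurrence is symmetric about the defect site n = 0. -/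
open Filter

/-- If `w 0 = 0`, `w` satisfies `w (n+1) = c n * w n - w (n-1)` for `n ≥ 1` with `c n > 2`,
and `w 1 > 0`, then `w` is bounded below by `w 1` on `n ≥ 1`. -/
lemma aux_grow (w c : ℤ → ℝ) (hc : ∀ n : ℤ, 1 ≤ n → 2 < c n) (h0 : w 0 = 0)
    (hrec : ∀ n : ℤ, 1 ≤ n → w (n + 1) = c n * w n - w (n - 1))
    (h1 : 0 < w 1) :
    ∀ k : ℕ, w 1 ≤ w (1 + k) ∧ w (1 + k) ≤ w (1 + k + 1) := by
  intro k
  induction k with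
  | zero =>
    have h := hrec 1 le_rfl
    norm_num at h ⊢
    have hc1 := hc 1 le_rfl
    rw [h, h0]; nlinarith
  | succ k ih =>
    obtain ⟨ihA, ihB⟩ := ih
    have e1 : (1 : ℤ) + (k + 1 : ℕ) = 1 + (k : ℤ) + 1 := by push_cast; ring
    rw [e1]
    constructor
    · exact ihA.trans ihB
    · have hn : (1 : ℤ) ≤ 1 + (k : ℤ) + 1 := by omega
      have h := hrec (1 + (k : ℤ) + 1) hn
      have e2 : (1 : ℤ) + (k : ℤ) + 1 - 1 = 1 + (k : ℤ) := by ring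
      rw [e2] at h
      have hcc := hc (1 + (k : ℤ) + 1) hn
      have hpos : 0 < w (1 + (k : ℤ) + 1) := lt_of_lt_of_le h1 (ihA.trans ihB)
      rw [h]
      nlinarith

lemma aux_nonpos (w c : ℤ → ℝ) (hc : ∀ n : ℤ, 1 ≤ n → 2 < c n) (h0 : w 0 = 0)
    (hrec : ∀ n : ℤ, 1 ≤ n → w (n + 1) = c n * w n - w (n - 1))
    (hlim : Tendsto w atTop (nhds 0)) : w 1 ≤ 0 := by
  by_contra h
  push_neg at h
  have grow := aux_grow w c hc h0 hrec h
  have hlim' : Tendsto (fun k : ℕ => w (1 + (k : ℤ))) atTop (nhds 0) := by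
    apply hlim.comp
    exact tendsto_atTop_add_const_left _ 1 tendsto_natCast_atTop_atTop
  have : w 1 ≤ 0 := ge_of_tendsto' hlim' (fun k => (grow k).1)
  linarith

/-- For a hard potential (B > 0), every homoclinic orbit to 0 of the single
mass-defect recurrence is symmetric about the defect site: β_{−n} = β_n. -/
theorem stmt_9 (Ω ω B m₀ : ℝ) (hΩ : 0 < Ω) (hω : 0 < ω) (hωΩ : ω < Ω)
    (hB : 0 < B) (β : ℤ → ℝ)
    (hrec : ∀ n : ℤ, β (n + 1) - 2 * β n + β (n - 1) =
      -(ω ^ 2 * m₀ * (if n = 0 then 1 else 0) + (ω ^ 2 - Ω ^ 2)) * β n + B * β n ^ 3)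
    (htop : Filter.Tendsto β Filter.atTop (nhds 0))
    (hbot : Filter.Tendsto β Filter.atBot (nhds 0)) :
    ∀ n : ℤ, β (-n) = β n := by
  set w : ℤ → ℝ := fun n => β n - β (-n) with hw
  set c : ℤ → ℝ := fun n => 2 - (ω ^ 2 - Ω ^ 2) + B * (β n ^ 2 + β n * β (-n) + β (-n) ^ 2)
    with hcdef
  have hc : ∀ n : ℤ, 1 ≤ n → 2 < c n := by
    intro n _
    have h1 : ω ^ 2 < Ω ^ 2 := by nlinarith
    have h2 : 0 ≤ β n ^ 2 + β n * β (-n) + β (-n) ^ 2 := by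
      nlinarith [sq_nonneg (β n + β (-n)), sq_nonneg (β n - β (-n))]
    have h3 : 0 ≤ B * (β n ^ 2 + β n * β (-n) + β (-n) ^ 2) := by positivity
    simp only [hcdef]
    linarith
  have h0 : w 0 = 0 := by simp [hw]
  have hwrec : ∀ n : ℤ, 1 ≤ n → w (n + 1) = c n * w n - w (n - 1) := by
    intro n hn
    have hn0 : n ≠ 0 := by omega
    have h1 := hrec n
    have h2 := hrec (-n)
    rw [if_neg hn0] at h1
    rw [if_neg (neg_ne_zero.mpr hn0)] at h2
    have e1 : -n + 1 = -(n - 1) := by ring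
    have e2 : -n - 1 = -(n + 1) := by ring
    rw [e1, e2] at h2
    simp only [hw, hcdef]
    linear_combination h1 - h2
  have hwlim : Tendsto w atTop (nhds 0) := by
    have hneg : Tendsto (fun n : ℤ => β (-n)) atTop (nhds 0) :=
      hbot.comp tendsto_neg_atTop_atBot
    have := htop.sub hneg
    simpa using this
  -- w 1 = 0
  have hle := aux_nonpos w c hc h0 hwrec hwlim
  have hge : -w 1 ≤ 0 := by
    apply aux_nonpos (fun n => -(w n)) c hc (by simp [h0])
    · intro n hn; simp [hwrec n hn]; ring
    · simpa using hwlim.neg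
  have hw1 : w 1 = 0 := le_antisymm hle (by linarith)
  -- forward induction: w = 0 on naturals
  have hzero : ∀ k : ℕ, w k = 0 ∧ w ((k : ℤ) + 1) = 0 := by
    intro k
    induction k with
    | zero => exact ⟨h0, by simpa using hw1⟩
    | succ k ih =>
      obtain ⟨ih1, ih2⟩ := ih
      have hn : (1 : ℤ) ≤ (k : ℤ) + 1 := by omega
      have h := hwrec ((k : ℤ) + 1) hn
      have e : (k : ℤ) + 1 - 1 = (k : ℤ) := by ring
      rw [e, ih1, ih2] at h
      constructor
      · push_cast; exact ih2
      · push_cast; rw [h]; ring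
  have hz : ∀ m : ℤ, 0 ≤ m → w m = 0 := by
    intro m hm
    lift m to ℕ using hm
    exact (hzero m).1
  intro n
  rcases le_or_gt 0 n with h | h
  · have := hz n h
    simp only [hw] at this
    linarith
  · have := hz (-n) (by omega)
    simp only [hw, neg_neg] at this
    linarith
end

section
/- Fix n₀ ∈ ℕ, μ ∈ ℝ with |μ| ≤ 1, B ∈ ℝ, and real sequences (θ_n), (κ_n) with θ_n = κ_n = 0 for |n| > n₀ and |κ_n| < 1, and set ε = max(sup_n |θ_n|, sup_n |κ_n|). Define L = [[0,1],[−1,2−μ]], T_n = [[0,0],[θ_n + (μ−2)κ_n, κ_n]], L_n = (I+T_n)L, the maps F(α,β) = (β, −α + (2−μ)β + Bβ³) and F_n(α,β) = (β, −(1+κ_n)α + (2+θ_n−μ)β + Bβ³), the matrices A_{−n₀−1} = I and A_n = L_n L_{n−1} ⋯ L_{−n₀} L^{−(n+n₀+1)} for −n₀ ≤ n ≤ n₀, and the maps F̂_n = A_n ∘ F ∘ A_{n−1}^{−1} for −n₀ ≤ n ≤ n₀. Then: (i) there exists C > 0 depending only on n₀ and B such that if ε ≤ 1/2 then for each −n₀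 ≤ n ≤ n₀ and every U ∈ ℝ², ‖F̂_n(U) − F_n(U)‖ ≤ C ε ‖U‖³; (ii) F̂_{n₀} ∘ F̂_{n₀−1} ∘ ⋯ ∘ F̂_{−n₀} = A_{n₀} ∘ F^{2n₀+1}; (iii) ‖A_{n₀} − I‖ ≤ C ε for some C depending only on n₀ (when ε ≤ 1/2 and |μ| ≤ 1). -/
attribute [local instance] Matrix.normedAddCommGroup

set_option maxHeartbeats 1000000

private lemma mnorm_mul (A B : Matrix (Fin 2) (Fin 2) ℝ) : ‖A * B‖ ≤ 2 * ‖A‖ * ‖B‖ := by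
  rw [Matrix.norm_le_iff (by positivity)]
  intro i j
  have h0 : ‖A i 0‖ ≤ ‖A‖ := A.norm_entry_le_entrywise_sup_norm
  have h1 : ‖A i 1‖ ≤ ‖A‖ := A.norm_entry_le_entrywise_sup_norm
  have g0 : ‖B 0 j‖ ≤ ‖B‖ := B.norm_entry_le_entrywise_sup_norm
  have g1 : ‖B 1 j‖ ≤ ‖B‖ := B.norm_entry_le_entrywise_sup_norm
  simp only [Real.norm_eq_abs] at h0 h1 g0 g1 ⊢
  rw [Matrix.mul_apply, Fin.sum_univ_two]
  have p0 : |A i 0 * B 0 j| ≤ ‖A‖ * ‖B‖ := by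
    rw [abs_mul]; exact mul_le_mul h0 g0 (abs_nonneg _) ((abs_nonneg _).trans h0)
  have p1 : |A i 1 * B 1 j| ≤ ‖A‖ * ‖B‖ := by
    rw [abs_mul]; exact mul_le_mul h1 g1 (abs_nonneg _) ((abs_nonneg _).trans h1)
  calc |A i 0 * B 0 j + A i 1 * B 1 j| ≤ |A i 0 * B 0 j| + |A i 1 * B 1 j| := abs_add_le _ _
    _ ≤ 2 * ‖A‖ * ‖B‖ := by linarith

private lemma mnorm_mulVec (A : Matrix (Fin 2) (Fin 2) ℝ) (v : Fin 2 → ℝ) :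
    ‖A.mulVec v‖ ≤ 2 * ‖A‖ * ‖v‖ := by
  rw [pi_norm_le_iff_of_nonneg (by positivity)]
  intro i
  have h0 : ‖A i 0‖ ≤ ‖A‖ := A.norm_entry_le_entrywise_sup_norm
  have h1 : ‖A i 1‖ ≤ ‖A‖ := A.norm_entry_le_entrywise_sup_norm
  have g0 : ‖v 0‖ ≤ ‖v‖ := norm_le_pi_norm v 0
  have g1 : ‖v 1‖ ≤ ‖v‖ := norm_le_pi_norm v 1
  simp only [Real.norm_eq_abs] at h0 h1 g0 g1 ⊢
  simp only [Matrix.mulVec, dotProduct, Fin.sum_univ_two]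
  have p0 : |A i 0 * v 0| ≤ ‖A‖ * ‖v‖ := by
    rw [abs_mul]; exact mul_le_mul h0 g0 (abs_nonneg _) ((abs_nonneg _).trans h0)
  have p1 : |A i 1 * v 1| ≤ ‖A‖ * ‖v‖ := by
    rw [abs_mul]; exact mul_le_mul h1 g1 (abs_nonneg _) ((abs_nonneg _).trans h1)
  calc |A i 0 * v 0 + A i 1 * v 1| ≤ |A i 0 * v 0| + |A i 1 * v 1| := abs_add_le _ _
    _ ≤ 2 * ‖A‖ * ‖v‖ := by linarith

private lemma mnorm_le (M : Matrix (Fin 2) (Fin 2) ℝ) (r : ℝ)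
    (h00 : |M 0 0| ≤ r) (h01 : |M 0 1| ≤ r) (h10 : |M 1 0| ≤ r) (h11 : |M 1 1| ≤ r) :
    ‖M‖ ≤ r := by
  rw [Matrix.norm_le_iff ((abs_nonneg _).trans h00)]
  intro i j
  fin_cases i <;> fin_cases j <;> simpa using ‹_›

private lemma Ncub_norm (B : ℝ) (v : Fin 2 → ℝ) : ‖(![0, B * v 1 ^ 3] : Fin 2 → ℝ)‖ ≤ |B| * ‖v‖ ^ 3 := by
  rw [pi_norm_le_iff_of_nonneg (by positivity)]
  intro i
  have g1 : |v 1| ≤ ‖v‖ := Real.norm_eq_abs (v 1) ▸ norm_le_pi_norm v 1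
  fin_cases i
  · simpa using by positivity
  · show ‖B * v 1 ^ 3‖ ≤ _
    rw [Real.norm_eq_abs, abs_mul, abs_pow]
    gcongr

private lemma Ncub_sub_norm (B : ℝ) (v w : Fin 2 → ℝ) (M : ℝ)
    (hv : |v 1| ≤ M) (hw : |w 1| ≤ M) :
    ‖(![0, B * v 1 ^ 3] : Fin 2 → ℝ) - ![0, B * w 1 ^ 3]‖ ≤ |B| * (3 * M ^ 2) * |v 1 - w 1| := by
  have hM : 0 ≤ M := (abs_nonneg _).trans hv
  rw [pi_norm_le_iff_of_nonneg (by positivity)]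
  intro i
  fin_cases i
  · simpa using by positivity
  · show ‖B * v 1 ^ 3 - B * w 1 ^ 3‖ ≤ _
    rw [Real.norm_eq_abs]
    have : B * v 1 ^ 3 - B * w 1 ^ 3 = B * ((v 1 - w 1) * (v 1 ^ 2 + v 1 * w 1 + w 1 ^ 2)) := by ring
    rw [this, abs_mul, abs_mul]
    have h2 : |v 1 ^ 2 + v 1 * w 1 + w 1 ^ 2| ≤ 3 * M ^ 2 := by
      have hv' := abs_le.mp hv
      have hw' := abs_le.mp hw
      rw [abs_le]
      constructor <;> nlinarith
    calc |B| * (|v 1 - w 1| * |v 1 ^ 2 + v 1 * w 1 + w 1 ^ 2|)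
        ≤ |B| * (|v 1 - w 1| * (3 * M ^ 2)) := by gcongr
      _ = |B| * (3 * M ^ 2) * |v 1 - w 1| := by ring

/-- Leading-order replacement of the nonautonomous defect maps F_n by
F̂_n = A_n ∘ F ∘ A_{n−1}⁻¹: (i) F̂_n approximates F_n up to Cε‖U‖³,
(ii) the composition of the F̂_n across the defect region equals
A_{n₀} ∘ F^{2n₀+1}, (iii) A_{n₀} is ε-close to the identity. -/
theorem stmt_12 (n₀ : ℕ) :
    ∃ C' > 0, ∀ B : ℝ, ∃ C > 0,
      ∀ (μ : ℝ) (θ κ : ℤ → ℝ) (ε : ℝ),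
        |μ| ≤ 1 →
        (∀ n : ℤ, (n₀ : ℤ) < |n| → θ n = 0 ∧ κ n = 0) →
        (∀ n : ℤ, |κ n| < 1) →
        (∀ n : ℤ, |θ n| ≤ ε) → (∀ n : ℤ, |κ n| ≤ ε) → ε ≤ 1 / 2 →
        let L : Matrix (Fin 2) (Fin 2) ℝ := !![0, 1; -1, 2 - μ]
        let T : ℤ → Matrix (Fin 2) (Fin 2) ℝ :=
          fun n => !![0, 0; θ n + (μ - 2) * κ n, κ n]
        let Ln : ℤ → Matrix (Fin 2) (Fin 2) ℝ := fun n => (1 + T n) * L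
        let F : (Fin 2 → ℝ) → Fin 2 → ℝ :=
          fun U => ![U 1, -U 0 + (2 - μ) * U 1 + B * U 1 ^ 3]
        let Fn : ℤ → (Fin 2 → ℝ) → Fin 2 → ℝ :=
          fun n U => ![U 1, -(1 + κ n) * U 0 + (2 + θ n - μ) * U 1 + B * U 1 ^ 3]
        let A : ℤ → Matrix (Fin 2) (Fin 2) ℝ := fun n =>
          (((List.range (n + n₀ + 1).toNat).map fun j => Ln (n - j)).prod) *
            L⁻¹ ^ (n + n₀ + 1).toNat
        let Fhat : ℤ → (Fin 2 → ℝ) → Fin 2 → ℝ := fun n U =>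
          Matrix.mulVec (A n) (F (Matrix.mulVec (A (n - 1))⁻¹ U))
        ((∀ n : ℤ, -(n₀ : ℤ) ≤ n → n ≤ (n₀ : ℤ) → ∀ U : Fin 2 → ℝ,
            ‖Fhat n U - Fn n U‖ ≤ C * ε * ‖U‖ ^ 3) ∧
          (∀ V : ℕ → Fin 2 → ℝ,
            (∀ j : ℕ, j < 2 * n₀ + 1 → V (j + 1) = Fhat (-(n₀ : ℤ) + j) (V j)) →
            V (2 * n₀ + 1) = Matrix.mulVec (A (n₀ : ℤ)) (F^[2 * n₀ + 1] (V 0))) ∧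
          ‖A (n₀ : ℤ) - 1‖ ≤ C' * ε) := by
  have hD1 : (1:ℝ) ≤ 100 ^ (2*n₀+1) := one_le_pow₀ (by norm_num)
  set D : ℝ := 100 ^ (2*n₀+1) with hD
  refine ⟨D, by positivity, fun B => ⟨8*(|B|+1)*D*(1+D)^3, by positivity, ?_⟩⟩
  intro μ θ κ ε hμ hsupp hκ1 hθ hκ hε
  intro L T Ln F Fn A Fhat
  have hε0 : 0 ≤ ε := (abs_nonneg _).trans (hθ 0)
  have hμ' := abs_le.mp hμ
  have hLdef : L = !![0, 1; -1, 2 - μ] := rfl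
  have hTdef : ∀ m : ℤ, T m = !![0, 0; θ m + (μ - 2) * κ m, κ m] := fun _ => rfl
  have hLndef0 : ∀ m : ℤ, Ln m = (1 + T m) * L := fun _ => rfl
  have hAdef : ∀ m : ℤ, A m =
      (((List.range (m + n₀ + 1).toNat).map fun j => Ln (m - j)).prod) *
        L⁻¹ ^ (m + n₀ + 1).toNat := fun _ => rfl
  have hFdef : ∀ v : Fin 2 → ℝ, F v = ![v 1, -v 0 + (2 - μ) * v 1 + B * v 1 ^ 3] := fun _ => rfl
  have hFndef : ∀ (m : ℤ) (v : Fin 2 → ℝ),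
      Fn m v = ![v 1, -(1 + κ m) * v 0 + (2 + θ m - μ) * v 1 + B * v 1 ^ 3] := fun _ _ => rfl
  have hFhatdef : ∀ (m : ℤ) (v : Fin 2 → ℝ),
      Fhat m v = (A m).mulVec (F ((A (m - 1))⁻¹.mulVec v)) := fun _ _ => rfl
  have hcoe : ∀ l : List ℕ, ((l : List ℕ) : List ℤ) = l.map (fun a : ℕ => (a:ℤ)) := by
    intro l
    simp only [List.pure_def, List.bind_eq_flatMap]
    induction l with
    | nil => rfl
    | cons a l ih => simp [ih]
  have hAdef' : ∀ m : ℤ, A m =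
      ((List.range (m + n₀ + 1).toNat).map (fun a : ℕ => Ln (m - a))).prod *
        L⁻¹ ^ (m + n₀ + 1).toNat := by
    intro m
    rw [hAdef m, hcoe, List.map_map]
    rfl
  have hdetL : L.det = 1 := by rw [hLdef, Matrix.det_fin_two_of]; ring
  have hUL : IsUnit L.det := by rw [hdetL]; exact isUnit_one
  have hLL : L * L⁻¹ = 1 := Matrix.mul_nonsing_inv _ hUL
  have hLL' : L⁻¹ * L = 1 := Matrix.nonsing_inv_mul _ hUL
  have hκc : ∀ m : ℤ, (1:ℝ)/2 ≤ 1 + κ m := by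
    intro m; have := abs_le.mp (hκ m); linarith
  have hκc0 : ∀ m : ℤ, (0:ℝ) < 1 + κ m := fun m => lt_of_lt_of_le (by norm_num) (hκc m)
  have hLndef : ∀ m : ℤ, Ln m = !![0, 1; -(1 + κ m), 2 + θ m - μ] := by
    intro m
    rw [hLndef0 m, hTdef m, hLdef]
    ext i j
    fin_cases i <;> fin_cases j <;>
      simp [Matrix.mul_apply, Fin.sum_univ_two, Matrix.add_apply, Matrix.one_apply] <;> ring
  have hdetLn : ∀ m : ℤ, (Ln m).det = 1 + κ m := by
    intro m; rw [hLndef m, Matrix.det_fin_two_of]; ring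
  have hULn : ∀ m : ℤ, IsUnit (Ln m).det := by
    intro m; rw [hdetLn m]; exact isUnit_iff_ne_zero.2 (ne_of_gt (hκc0 m))
  have hLinv : L⁻¹ = !![2 - μ, -1; 1, 0] := by
    apply Matrix.inv_eq_right_inv
    rw [hLdef]
    ext i j
    fin_cases i <;> fin_cases j <;>
      simp [Matrix.mul_apply, Fin.sum_univ_two, Matrix.one_apply] <;> ring
  have hLninv : ∀ m : ℤ, (Ln m)⁻¹ =
      !![(2 + θ m - μ)/(1 + κ m), -(1/(1 + κ m)); 1, 0] := by
    intro m
    have hc := (hκc0 m).ne'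
    apply Matrix.inv_eq_right_inv
    rw [hLndef m]
    ext i j
    fin_cases i <;> fin_cases j <;>
      simp [Matrix.mul_apply, Fin.sum_univ_two, Matrix.one_apply] <;> field_simp <;> ring
  -- norm bounds on the basic matrices
  have hnL : ‖L‖ ≤ 3 := by
    rw [hLdef]
    apply mnorm_le <;> (simp; try (rw [abs_le]; constructor)) <;> linarith
  have hnLinv : ‖L⁻¹‖ ≤ 3 := by
    rw [hLinv]
    apply mnorm_le <;> (simp; try (rw [abs_le]; constructor)) <;> linarith
  have hnT : ∀ m : ℤ, ‖T m‖ ≤ 4 * ε := by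
    intro m
    have h1 := abs_le.mp (hθ m)
    have h2 := abs_le.mp (hκ m)
    have h3 : |(μ - 2) * κ m| ≤ 3 * ε := by
      rw [abs_mul]
      have : |μ - 2| ≤ 3 := by rw [abs_le]; constructor <;> linarith
      exact mul_le_mul this (hκ m) (abs_nonneg _) (by norm_num)
    have h3' := abs_le.mp h3
    rw [hTdef m]
    apply mnorm_le <;> (simp; try (rw [abs_le]; constructor)) <;> linarith
  have hnLn : ∀ m : ℤ, ‖Ln m‖ ≤ 4 := by
    intro m
    have h1 := abs_le.mp (hθ m)
    have h2 := abs_le.mp (hκ m)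
    rw [hLndef m]
    apply mnorm_le <;> (simp; try (rw [abs_le]; constructor)) <;> linarith
  have hnLninv : ∀ m : ℤ, ‖(Ln m)⁻¹‖ ≤ 7 := by
    intro m
    have hc0 := hκc0 m
    have hc := hκc m
    have h1 := abs_le.mp (hθ m)
    have hd : |2 + θ m - μ| ≤ 7/2 := by rw [abs_le]; constructor <;> linarith
    have e1 : |(2 + θ m - μ)/(1 + κ m)| ≤ 7 := by
      rw [abs_div, abs_of_pos hc0, div_le_iff₀ hc0]
      have := abs_le.mp hd
      nlinarith [abs_nonneg (2 + θ m - μ)]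
    have e2 : |-(1/(1 + κ m))| ≤ 7 := by
      rw [abs_neg, abs_div, abs_of_pos hc0, abs_one, div_le_iff₀ hc0]
      linarith
    rw [hLninv m]
    apply mnorm_le
    · exact e1
    · exact e2
    · exact by norm_num
    · exact by norm_num
  have hLLninv : ∀ m : ℤ, ‖L * (Ln m)⁻¹ - 1‖ ≤ 8 * ε := by
    intro m
    have hc0 := hκc0 m
    have hc := hκc m
    have hc' := hc0.ne'
    have hθ' := abs_le.mp (hθ m)
    have hκ' := abs_le.mp (hκ m)
    have hprod : L * (Ln m)⁻¹ =
        !![1, 0; ((2 - μ) * κ m - θ m)/(1 + κ m), 1/(1 + κ m)] := by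
      rw [hLdef, hLninv m]
      ext i j
      fin_cases i <;> fin_cases j <;> simp [Matrix.mul_apply, Fin.sum_univ_two] <;>
        field_simp <;> ring
    have e1 : |((2 - μ) * κ m - θ m)/(1 + κ m)| ≤ 8 * ε := by
      rw [abs_div, abs_of_pos hc0, div_le_iff₀ hc0]
      have h4 : |(2 - μ) * κ m| ≤ 3 * ε := by
        rw [abs_mul]
        have h5 : |2 - μ| ≤ 3 := by rw [abs_le]; constructor <;> linarith
        exact mul_le_mul h5 (hκ m) (abs_nonneg _) (by norm_num)
      have h4' := abs_le.mp h4
      have h6 : |(2 - μ) * κ m - θ m| ≤ 4 * ε := by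
        rw [abs_le]; constructor <;> linarith
      refine h6.trans ?_
      nlinarith
    have e2 : |1/(1 + κ m) - 1| ≤ 8 * ε := by
      rw [show 1/(1 + κ m) - 1 = -κ m/(1 + κ m) by field_simp; ring]
      rw [abs_div, abs_neg, abs_of_pos hc0, div_le_iff₀ hc0, abs_le]
      constructor <;> nlinarith
    rw [hprod]
    apply mnorm_le
    · simpa using by positivity
    · simpa using by positivity
    · simpa using e1
    · simpa using e2
  -- base case and recurrence for A
  have hAbase : A (-(n₀:ℤ) - 1) = 1 := by
    have h0 : (-(n₀:ℤ) - 1 + n₀ + 1).toNat = 0 := by omega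
    rw [hAdef', h0]
    simp
  have hArec : ∀ n : ℤ, -(n₀:ℤ) ≤ n → A n = Ln n * A (n - 1) * L⁻¹ := by
    intro n hn
    have hk : (n + n₀ + 1).toNat = (n - 1 + n₀ + 1).toNat + 1 := by omega
    rw [hAdef' n, hAdef' (n - 1), hk, List.range_succ_eq_map, List.map_cons, List.prod_cons,
      List.map_map, pow_succ]
    have hfun : ((fun a : ℕ => Ln (n - a)) ∘ Nat.succ) = fun a : ℕ => Ln (n - 1 - a) := by
      funext j
      simp only [Function.comp_apply]
      congr 1
      push_cast
      ring
    rw [hfun]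
    simp only [Nat.cast_zero, sub_zero]
    simp only [mul_assoc]
  -- the main induction
  have hmain : ∀ k : ℕ, IsUnit (A (-(n₀:ℤ) - 1 + k)).det ∧
      ‖A (-(n₀:ℤ) - 1 + k) - 1‖ ≤ (100 ^ k - 1) * ε ∧
      ‖(A (-(n₀:ℤ) - 1 + k))⁻¹ - 1‖ ≤ (100 ^ k - 1) * ε := by
    intro k
    induction k with
    | zero =>
      simp only [Nat.cast_zero, add_zero]
      rw [hAbase]
      refine ⟨by simp, ?_, ?_⟩ <;> simp
    | succ k ih =>
      obtain ⟨ihu, ihE, ihE'⟩ := ih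
      set m : ℤ := -(n₀:ℤ) - 1 + k with hm
      have hcast : -(n₀:ℤ) - 1 + ((k + 1 : ℕ) : ℤ) = m + 1 := by
        rw [hm]; push_cast; ring
      have hge : -(n₀:ℤ) ≤ m + 1 := by omega
      rw [hcast]
      have hrec := hArec (m + 1) hge
      rw [show m + 1 - 1 = m by ring] at hrec
      have hpow : (1:ℝ) ≤ 100 ^ k := one_le_pow₀ (by norm_num)
      have hpow0 : (0:ℝ) ≤ 100 ^ k := by positivity
      have hu : IsUnit (A (m + 1)).det := by
        rw [hrec, Matrix.det_mul, Matrix.det_mul]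
        refine ((hULn (m + 1)).mul ihu).mul ?_
        rw [Matrix.det_nonsing_inv, hdetL]
        simp
      refine ⟨hu, ?_, ?_⟩
      · have hid : A (m + 1) - 1 = Ln (m + 1) * ((A m - 1) * L⁻¹) + T (m + 1) := by
          have h2 : Ln (m + 1) * L⁻¹ = 1 + T (m + 1) := by
            rw [hLndef0 (m + 1), mul_assoc, hLL, mul_one]
          calc A (m + 1) - 1
              = Ln (m + 1) * ((A m - 1) * L⁻¹) + (Ln (m + 1) * L⁻¹ - 1) := by
                rw [hrec]; noncomm_ring
            _ = Ln (m + 1) * ((A m - 1) * L⁻¹) + T (m + 1) := by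
                rw [h2, add_sub_cancel_left]
        rw [hid]
        have b1 : ‖(A m - 1) * L⁻¹‖ ≤ 2 * ‖A m - 1‖ * 3 := by
          have h3 := mnorm_mul (A m - 1) L⁻¹
          nlinarith [norm_nonneg (A m - 1), norm_nonneg (L⁻¹ : Matrix (Fin 2) (Fin 2) ℝ)]
        have b2 : ‖Ln (m + 1) * ((A m - 1) * L⁻¹)‖ ≤ 2 * 4 * (2 * ‖A m - 1‖ * 3) := by
          have h3 := mnorm_mul (Ln (m + 1)) ((A m - 1) * L⁻¹)
          nlinarith [norm_nonneg (Ln (m + 1)), norm_nonneg ((A m - 1) * L⁻¹),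
            hnLn (m + 1), norm_nonneg (A m - 1)]
        calc ‖Ln (m + 1) * ((A m - 1) * L⁻¹) + T (m + 1)‖
            ≤ ‖Ln (m + 1) * ((A m - 1) * L⁻¹)‖ + ‖T (m + 1)‖ := norm_add_le _ _
          _ ≤ (100 ^ (k + 1) - 1) * ε := by
              have h5 := hnT (m + 1)
              rw [pow_succ]
              nlinarith [norm_nonneg (A m - 1), mul_nonneg hε0 hpow0]
      · have hrec' : (A (m + 1))⁻¹ = L * ((A m)⁻¹ * (Ln (m + 1))⁻¹) := by
          rw [hrec, Matrix.mul_inv_rev (Ln (m + 1) * A m) L⁻¹,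
            Matrix.mul_inv_rev (Ln (m + 1)) (A m),
            Matrix.nonsing_inv_nonsing_inv _ hUL]
        have hid : (A (m + 1))⁻¹ - 1 =
            L * (((A m)⁻¹ - 1) * (Ln (m + 1))⁻¹) + (L * (Ln (m + 1))⁻¹ - 1) := by
          rw [hrec']; noncomm_ring
        rw [hid]
        have b1 : ‖((A m)⁻¹ - 1) * (Ln (m + 1))⁻¹‖ ≤ 2 * ‖(A m)⁻¹ - 1‖ * 7 := by
          have h3 := mnorm_mul ((A m)⁻¹ - 1) (Ln (m + 1))⁻¹
          nlinarith [norm_nonneg ((A m)⁻¹ - 1), norm_nonneg ((Ln (m + 1))⁻¹),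
            hnLninv (m + 1)]
        have b2 : ‖L * (((A m)⁻¹ - 1) * (Ln (m + 1))⁻¹)‖ ≤
            2 * 3 * (2 * ‖(A m)⁻¹ - 1‖ * 7) := by
          have h3 := mnorm_mul L (((A m)⁻¹ - 1) * (Ln (m + 1))⁻¹)
          nlinarith [norm_nonneg (L : Matrix (Fin 2) (Fin 2) ℝ),
            norm_nonneg (((A m)⁻¹ - 1) * (Ln (m + 1))⁻¹), norm_nonneg ((A m)⁻¹ - 1)]
        calc ‖L * (((A m)⁻¹ - 1) * (Ln (m + 1))⁻¹) + (L * (Ln (m + 1))⁻¹ - 1)‖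
            ≤ ‖L * (((A m)⁻¹ - 1) * (Ln (m + 1))⁻¹)‖ + ‖L * (Ln (m + 1))⁻¹ - 1‖ :=
              norm_add_le _ _
          _ ≤ (100 ^ (k + 1) - 1) * ε := by
              have h5 := hLLninv (m + 1)
              rw [pow_succ]
              nlinarith [norm_nonneg ((A m)⁻¹ - 1), mul_nonneg hε0 hpow0]
  -- uniform bound on the defect range
  have hAbound : ∀ n : ℤ, -(n₀:ℤ) - 1 ≤ n → n ≤ (n₀:ℤ) →
      IsUnit (A n).det ∧ ‖A n - 1‖ ≤ D * ε ∧ ‖(A n)⁻¹ - 1‖ ≤ D * ε := by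
    intro n h1 h2
    obtain ⟨k, hk, hkle⟩ : ∃ k : ℕ, n = -(n₀:ℤ) - 1 + k ∧ k ≤ 2 * n₀ + 1 :=
      ⟨(n + n₀ + 1).toNat, by omega, by omega⟩
    obtain ⟨hu, hE, hE'⟩ := hmain k
    rw [← hk] at hu hE hE'
    have hb : (100:ℝ) ^ k - 1 ≤ D := by
      have h3 := pow_le_pow_right₀ (by norm_num : (1:ℝ) ≤ 100) hkle
      rw [hD]
      linarith
    have hbε : ((100:ℝ) ^ k - 1) * ε ≤ D * ε := mul_le_mul_of_nonneg_right hb hε0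
    exact ⟨hu, hE.trans hbε, hE'.trans hbε⟩
  refine ⟨?_, ?_, ?_⟩
  · -- part (i)
    intro n hn1 hn2 U
    obtain ⟨hu', _, hE''⟩ := hAbound (n - 1) (by omega) (by omega)
    obtain ⟨hu, hE, _⟩ := hAbound n (by omega) hn2
    set W : Fin 2 → ℝ := (A (n - 1))⁻¹.mulVec U with hW
    have hUW : (A (n - 1)).mulVec W = U := by
      rw [hW, Matrix.mulVec_mulVec, Matrix.mul_nonsing_inv _ hu', Matrix.one_mulVec]
    have hFW : F W = L.mulVec W + ![0, B * W 1 ^ 3] := by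
      funext i
      fin_cases i <;>
        (simp [hFdef, hLdef, Matrix.mulVec, dotProduct, Fin.sum_univ_two,
          Pi.add_apply]; try ring)
    have hFnU : Fn n U = (Ln n).mulVec U + ![0, B * U 1 ^ 3] := by
      funext i
      fin_cases i <;>
        (simp [hFndef, hLndef n, Matrix.mulVec, dotProduct, Fin.sum_univ_two,
          Pi.add_apply]; try ring)
    have hANL : A n * L = Ln n * A (n - 1) := by
      rw [hArec n hn1, mul_assoc, hLL', mul_one]
    have key : Fhat n U - Fn n U =
        (A n - 1).mulVec ![0, B * W 1 ^ 3] +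
          ((![0, B * W 1 ^ 3] : Fin 2 → ℝ) - ![0, B * U 1 ^ 3]) := by
      have h1 : Fhat n U = (Ln n).mulVec U + (A n).mulVec ![0, B * W 1 ^ 3] := by
        rw [hFhatdef, ← hW, hFW, Matrix.mulVec_add, Matrix.mulVec_mulVec, hANL,
          ← Matrix.mulVec_mulVec, hUW]
      rw [h1, hFnU, Matrix.sub_mulVec, Matrix.one_mulVec]
      abel
    rw [key]
    have hWU : ‖W - U‖ ≤ 2 * (D * ε) * ‖U‖ := by
      have hWU0 : W - U = ((A (n - 1))⁻¹ - 1).mulVec U := by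
        rw [Matrix.sub_mulVec, Matrix.one_mulVec, hW]
      rw [hWU0]
      have h3 := mnorm_mulVec ((A (n - 1))⁻¹ - 1) U
      nlinarith [norm_nonneg U, norm_nonneg ((A (n - 1))⁻¹ - 1)]
    have hDε : 2 * (D * ε) * ‖U‖ ≤ D * ‖U‖ := by
      nlinarith [norm_nonneg U, mul_nonneg (by linarith : (0:ℝ) ≤ D) (norm_nonneg U)]
    have hWn : ‖W‖ ≤ (1 + D) * ‖U‖ := by
      have h3 := norm_sub_norm_le W U
      have h4 := norm_nonneg U
      nlinarith
    have hU1 : |U 1| ≤ (1 + D) * ‖U‖ := by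
      have h3 : |U 1| ≤ ‖U‖ := Real.norm_eq_abs (U 1) ▸ norm_le_pi_norm U 1
      nlinarith [norm_nonneg U]
    have hW1 : |W 1| ≤ (1 + D) * ‖U‖ := by
      have h3 : |W 1| ≤ ‖W‖ := Real.norm_eq_abs (W 1) ▸ norm_le_pi_norm W 1
      linarith
    have hW1U1 : |W 1 - U 1| ≤ 2 * (D * ε) * ‖U‖ := by
      have h3 : |W 1 - U 1| ≤ ‖W - U‖ := by
        have h4 := norm_le_pi_norm (W - U) 1
        simpa using h4
      linarith
    have hNW : ‖(![0, B * W 1 ^ 3] : Fin 2 → ℝ)‖ ≤ |B| * ((1 + D) * ‖U‖) ^ 3 := by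
      refine (Ncub_norm B W).trans ?_
      gcongr
    have t1 : ‖(A n - 1).mulVec ![0, B * W 1 ^ 3]‖ ≤
        2 * (D * ε) * (|B| * ((1 + D) * ‖U‖) ^ 3) := by
      refine (mnorm_mulVec _ _).trans ?_
      gcongr
    have t2 : ‖(![0, B * W 1 ^ 3] : Fin 2 → ℝ) - ![0, B * U 1 ^ 3]‖ ≤
        |B| * (3 * ((1 + D) * ‖U‖) ^ 2) * (2 * (D * ε) * ‖U‖) := by
      refine (Ncub_sub_norm B W U ((1 + D) * ‖U‖) hW1 hU1).trans ?_
      gcongr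
    have hfac : (2 * (1 + D) ^ 3 + 6 * (1 + D) ^ 2) * |B| ≤ 8 * (1 + D) ^ 3 * (|B| + 1) := by
      nlinarith [abs_nonneg B, sq_nonneg (1 + D),
        mul_nonneg (abs_nonneg B) (sq_nonneg (1 + D)),
        mul_nonneg (mul_nonneg (abs_nonneg B) (sq_nonneg (1 + D))) (by linarith : (0:ℝ) ≤ D),
        pow_nonneg (by linarith : (0:ℝ) ≤ 1 + D) 3]
    calc ‖(A n - 1).mulVec ![0, B * W 1 ^ 3] +
          ((![0, B * W 1 ^ 3] : Fin 2 → ℝ) - ![0, B * U 1 ^ 3])‖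
        ≤ ‖(A n - 1).mulVec ![0, B * W 1 ^ 3]‖ +
            ‖(![0, B * W 1 ^ 3] : Fin 2 → ℝ) - ![0, B * U 1 ^ 3]‖ := norm_add_le _ _
      _ ≤ 2 * (D * ε) * (|B| * ((1 + D) * ‖U‖) ^ 3) +
            |B| * (3 * ((1 + D) * ‖U‖) ^ 2) * (2 * (D * ε) * ‖U‖) := add_le_add t1 t2
      _ = (2 * (1 + D) ^ 3 + 6 * (1 + D) ^ 2) * |B| * (D * ε * ‖U‖ ^ 3) := by ring
      _ ≤ 8 * (1 + D) ^ 3 * (|B| + 1) * (D * ε * ‖U‖ ^ 3) :=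
          mul_le_mul_of_nonneg_right hfac (by positivity)
      _ = 8 * (|B| + 1) * D * (1 + D) ^ 3 * ε * ‖U‖ ^ 3 := by ring
  · -- part (ii)
    intro V hV
    have hVj : ∀ j : ℕ, j ≤ 2 * n₀ + 1 →
        V j = (A (-(n₀:ℤ) + j - 1)).mulVec (F^[j] (V 0)) := by
      intro j
      induction j with
      | zero =>
        intro _
        rw [show -(n₀:ℤ) + ((0:ℕ):ℤ) - 1 = -(n₀:ℤ) - 1 by push_cast; ring,
          hAbase, Function.iterate_zero, id_eq, Matrix.one_mulVec]
      | succ j ih =>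
        intro hj
        have hj' : j ≤ 2 * n₀ + 1 := by omega
        have hb1 : -(n₀:ℤ) - 1 ≤ -(n₀:ℤ) + j - 1 := by omega
        have hb2 : -(n₀:ℤ) + j - 1 ≤ (n₀:ℤ) := by omega
        obtain ⟨huj, _, _⟩ := hAbound _ hb1 hb2
        rw [hV j (by omega), hFhatdef, ih hj', Matrix.mulVec_mulVec,
          Matrix.nonsing_inv_mul _ huj, Matrix.one_mulVec,
          show -(n₀:ℤ) + ((j + 1 : ℕ) : ℤ) - 1 = -(n₀:ℤ) + j by push_cast; ring,
          Function.iterate_succ_apply' F j (V 0)]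
    have h6 := hVj (2 * n₀ + 1) le_rfl
    rw [h6, show -(n₀:ℤ) + ((2 * n₀ + 1 : ℕ) : ℤ) - 1 = (n₀:ℤ) by push_cast; ring]
  · -- part (iii)
    exact (hAbound (n₀:ℤ) (by omega) le_rfl).2.1
end

section
/- Fix n₀ ∈ ℕ and Ω > 0. There exists a constant C > 0, depending only on n₀ and Ω, with the following property. Let μ ∈ ℝ with |μ| ≤ 1, set ω² = Ω² + μ, and let (ε_n), (η_n), (γ_n), (κ_n) be real sequences vanishing for |n| > n₀ with ε̄ := max of the sup norms of the four sequences ≤ 1/2. Define θ_n = Ω²(η_n + η_nγ_n + γ_n) − ω²ε_n + κ_n, T_n = [[0,0],[θ_n + (μ−2)κ_n, κ_n]], L = [[0,1],[−1,2−μ]], L_n = (I+T_n)L, A = L_{n₀} L_{n₀−1} ⋯ L_{−n₀} L^{−(2n₀+1)}, and ρ_n = Ω²(η_n + γ_n − ε_n). Let M be the 2×2 matrix with entries M₁₁ = Σ_{n=0}^{2n₀} [n(n+1)ρ_{n₀−n} − n κ_{n₀−n}], M₁₂ = Σ_{n=0}^{2n₀} [−n² ρ_{n₀−n} + n κ_{n₀−n}],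 M₂₁ = Σ_{n=0}^{2n₀} [(n+1)² ρ_{n₀−n} − (n+1) κ_{n₀−n}], M₂₂ = Σ_{n=0}^{2n₀} [−n(n+1) ρ_{n₀−n} + (n+1) κ_{n₀−n}]. Then ‖A − I − M‖ ≤ C (ε̄² + ε̄|μ|). -/
attribute [local instance] Matrix.normedAddCommGroup

section Aux
open Matrix
abbrev m2 := Matrix (Fin 2) (Fin 2) ℝ

lemma norm2_le {A : m2} {r : ℝ} (h : 0 ≤ r) (h00 : |A 0 0| ≤ r) (h01 : |A 0 1| ≤ r)
    (h10 : |A 1 0| ≤ r) (h11 : |A 1 1| ≤ r) : ‖A‖ ≤ r := by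
  refine (Matrix.norm_le_iff h).2 fun i j => ?_
  fin_cases i <;> fin_cases j <;> simpa using ‹_›

lemma norm_lit_le {a b c d r : ℝ} (h0 : 0 ≤ r) (ha : |a| ≤ r) (hb : |b| ≤ r)
    (hc : |c| ≤ r) (hd : |d| ≤ r) : ‖(!![a,b;c,d] : m2)‖ ≤ r := by
  refine norm2_le h0 ?_ ?_ ?_ ?_ <;> simp [*]

lemma norm_mul_le₂ (A B : m2) : ‖A * B‖ ≤ 2 * ‖A‖ * ‖B‖ := by
  refine (Matrix.norm_le_iff (by positivity)).2 fun i j => ?_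
  rw [Matrix.mul_apply, Fin.sum_univ_two]
  have h1 : ‖A i 0‖ ≤ ‖A‖ := Matrix.norm_entry_le_entrywise_sup_norm A
  have h2 : ‖A i 1‖ ≤ ‖A‖ := Matrix.norm_entry_le_entrywise_sup_norm A
  have h3 : ‖B 0 j‖ ≤ ‖B‖ := Matrix.norm_entry_le_entrywise_sup_norm B
  have h4 : ‖B 1 j‖ ≤ ‖B‖ := Matrix.norm_entry_le_entrywise_sup_norm B
  calc ‖A i 0 * B 0 j + A i 1 * B 1 j‖ ≤ ‖A i 0 * B 0 j‖ + ‖A i 1 * B 1 j‖ := norm_add_le _ _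
  _ = ‖A i 0‖ * ‖B 0 j‖ + ‖A i 1‖ * ‖B 1 j‖ := by simp [abs_mul]
  _ ≤ 2 * ‖A‖ * ‖B‖ := by
      have e1 : ‖A i 0‖ * ‖B 0 j‖ ≤ ‖A‖ * ‖B‖ := mul_le_mul h1 h3 (norm_nonneg _) (norm_nonneg _)
      have e2 : ‖A i 1‖ * ‖B 1 j‖ ≤ ‖A‖ * ‖B‖ := mul_le_mul h2 h4 (norm_nonneg _) (norm_nonneg _)
      linarith

lemma norm_mul3_le' {X Y Z : m2} {x y z : ℝ} (hX : ‖X‖ ≤ x) (hY : ‖Y‖ ≤ y) (hZ : ‖Z‖ ≤ z) :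
    ‖X * Y * Z‖ ≤ 4 * (x * y * z) := by
  have hx0 : 0 ≤ x := le_trans (norm_nonneg _) hX
  have hy0 : 0 ≤ y := le_trans (norm_nonneg _) hY
  have hz0 : 0 ≤ z := le_trans (norm_nonneg _) hZ
  have h1 : ‖X * Y‖ ≤ 2 * x * y := by
    have := norm_mul_le₂ X Y
    nlinarith [norm_nonneg X, norm_nonneg Y]
  have h2 := norm_mul_le₂ (X * Y) Z
  nlinarith [norm_nonneg (X * Y), norm_nonneg Z]

lemma norm_pow_le₂ {A : m2} {c : ℝ} (hc : 1 ≤ c) (h : ‖A‖ ≤ c) (j : ℕ) :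
    ‖A ^ j‖ ≤ (2 * c) ^ j := by
  induction j with
  | zero => simpa using norm2_le (by norm_num) (by norm_num) (by norm_num) (by norm_num) (by norm_num)
  | succ n ih =>
    calc ‖A ^ (n+1)‖ = ‖A ^ n * A‖ := by rw [pow_succ]
    _ ≤ 2 * ‖A ^ n‖ * ‖A‖ := norm_mul_le₂ _ _
    _ ≤ (2*c)^(n+1) := by
        rw [pow_succ]
        have h0 : (0:ℝ) ≤ ‖A ^ n‖ := norm_nonneg _
        have h1 : (0:ℝ) ≤ ‖A‖ := norm_nonneg _
        nlinarith [pow_nonneg (by linarith : (0:ℝ) ≤ 2*c) n]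

lemma norm_pow_sub_le₂ {A B : m2} {c d : ℝ} (hc : 1 ≤ c) (hA : ‖A‖ ≤ c) (hB : ‖B‖ ≤ c)
    (hd : ‖A - B‖ ≤ d) (j : ℕ) : ‖A ^ j - B ^ j‖ ≤ j * (2 * c) ^ j * d := by
  have hd0 : 0 ≤ d := le_trans (norm_nonneg _) hd
  induction j with
  | zero => simp
  | succ n ih =>
    have key : A ^ (n+1) - B ^ (n+1) = (A ^ n - B ^ n) * A + B ^ n * (A - B) := by
      rw [pow_succ, pow_succ]; noncomm_ring
    rw [key]
    have e1 : ‖(A ^ n - B ^ n) * A‖ ≤ 2 * (n * (2*c)^n * d) * c := by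
      calc ‖(A ^ n - B ^ n) * A‖ ≤ 2 * ‖A ^ n - B ^ n‖ * ‖A‖ := norm_mul_le₂ _ _
      _ ≤ 2 * (n * (2*c)^n * d) * c := by
          have := norm_nonneg (A ^ n - B ^ n)
          nlinarith [mul_nonneg (mul_nonneg (Nat.cast_nonneg n) (pow_nonneg (by linarith : (0:ℝ) ≤ 2*c) n)) hd0]
    have e2 : ‖B ^ n * (A - B)‖ ≤ 2 * (2*c)^n * d := by
      calc ‖B ^ n * (A - B)‖ ≤ 2 * ‖B ^ n‖ * ‖A - B‖ := norm_mul_le₂ _ _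
      _ ≤ 2 * (2*c)^n * d := by
          have h1 := norm_pow_le₂ hc hB n
          have := norm_nonneg (B ^ n)
          have := norm_nonneg (A - B)
          nlinarith [pow_nonneg (by linarith : (0:ℝ) ≤ 2*c) n]
    calc ‖(A ^ n - B ^ n) * A + B ^ n * (A - B)‖ ≤ ‖(A ^ n - B ^ n) * A‖ + ‖B ^ n * (A - B)‖ := norm_add_le _ _
    _ ≤ 2 * (n * (2*c)^n * d) * c + 2 * (2*c)^n * d := by linarith
    _ ≤ (n+1 : ℕ) * (2*c)^(n+1) * d := by
        push_cast
        rw [pow_succ]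
        have hp : (1:ℝ) ≤ (2*c)^n := one_le_pow₀ (by linarith : (1:ℝ) ≤ 2*c)
        nlinarith [mul_nonneg (mul_nonneg (by linarith : (0:ℝ) ≤ (2*c)^n) hd0) (by linarith : (0:ℝ) ≤ 2*c-2), Nat.cast_nonneg (α := ℝ) n, mul_nonneg (Nat.cast_nonneg (α := ℝ) n) hd0]

-- conjugation identity in a monoid
lemma conj_prod {M : Type*} [Monoid M] (L Li : M) (h1 : L * Li = 1) (h2 : Li * L = 1)
    (g : ℕ → M) (N : ℕ) :
    ((List.range N).map (fun j => g j * L)).prod * Li ^ N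
      = ((List.range N).map (fun j => L ^ j * g j * Li ^ j)).prod := by
  have hps : ∀ k : ℕ, Li ^ k * L ^ k = 1 := by
    intro k
    induction k with
    | zero => simp
    | succ n ih => rw [pow_succ, pow_succ']; rw [mul_assoc, ← mul_assoc Li, h2, one_mul, ih]
  induction N with
  | zero => simp
  | succ n ih =>
    rw [List.range_succ, List.map_append, List.map_append, List.prod_append, List.prod_append]
    simp only [List.map_cons, List.map_nil, List.prod_cons, List.prod_nil, mul_one]
    rw [← ih]
    have : Li ^ (n+1) = Li * Li ^ n := by rw [pow_succ']
    rw [this]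
    calc ((List.range n).map (fun j => g j * L)).prod * (g n * L) * (Li * Li ^ n)
        = ((List.range n).map (fun j => g j * L)).prod * (g n * (L * Li) * Li ^ n) := by
          simp only [mul_assoc]
      _ = ((List.range n).map (fun j => g j * L)).prod * (g n * Li ^ n) := by rw [h1, mul_one]
      _ = ((List.range n).map (fun j => g j * L)).prod * Li ^ n * (L ^ n * (g n * Li ^ n)) := by
          rw [mul_assoc, ← mul_assoc (Li ^ n), hps n, one_mul]
      _ = ((List.range n).map (fun j => g j * L)).prod * Li ^ n * (L ^ n * g n * Li ^ n) := by
          simp only [mul_assoc]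

lemma pow_mul_pow_inv {M : Type*} [Monoid M] (L Li : M) (h1 : L * Li = 1) (k : ℕ) :
    L ^ k * Li ^ k = 1 := by
  induction k with
  | zero => simp
  | succ n ih => rw [pow_succ, pow_succ']; rw [mul_assoc, ← mul_assoc L, h1, one_mul, ih]

lemma list_sum_norm_le {b : ℝ} (l : List m2) (h : ∀ x ∈ l, ‖x‖ ≤ b) :
    ‖l.sum‖ ≤ l.length * b := by
  induction l with
  | nil => simp
  | cons x t ih =>
    have hb := le_trans (norm_nonneg x) (h x (by simp))
    calc ‖(x :: t).sum‖ = ‖x + t.sum‖ := by simp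
    _ ≤ ‖x‖ + ‖t.sum‖ := norm_add_le _ _
    _ ≤ b + t.length * b := by
        have := ih (fun y hy => h y (by simp [hy]))
        have := h x (by simp)
        linarith
    _ = (x :: t).length * b := by simp; ring

lemma prod_expand {b : ℝ} (hb : 0 ≤ b) (l : List m2) (h : ∀ x ∈ l, ‖x‖ ≤ b) :
    ‖(l.map (fun x => 1 + x)).prod - 1 - l.sum‖
      ≤ (l.length : ℝ)^2 * (1 + 2*b)^l.length * b^2 := by
  induction l with
  | nil => simp
  | cons x t ih =>
    have hx : ‖x‖ ≤ b := h x (by simp)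
    have ht : ∀ y ∈ t, ‖y‖ ≤ b := fun y hy => h y (by simp [hy])
    set P := (t.map (fun x => 1 + x)).prod with hP
    set S := t.sum with hS
    have key : ((x :: t).map (fun x => 1 + x)).prod - 1 - (x :: t).sum
        = (P - 1 - S) + x * S + x * (P - 1 - S) := by
      simp only [List.map_cons, List.prod_cons, List.sum_cons, ← hP, ← hS]
      noncomm_ring
    rw [key]
    have hD := ih ht
    have hSn : ‖S‖ ≤ t.length * b := list_sum_norm_le t ht
    set n := t.length with hn
    have hp1 : (1:ℝ) ≤ (1+2*b)^n := one_le_pow₀ (by linarith)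
    have e1 : ‖x * S‖ ≤ 2 * b * (n * b) := by
      calc ‖x * S‖ ≤ 2 * ‖x‖ * ‖S‖ := norm_mul_le₂ _ _
      _ ≤ 2 * b * (n * b) := by
          have := norm_nonneg x
          have := norm_nonneg S
          nlinarith [Nat.cast_nonneg (α := ℝ) n]
    have e2 : ‖x * (P - 1 - S)‖ ≤ 2 * b * ((n:ℝ)^2 * (1+2*b)^n * b^2) := by
      calc ‖x * (P - 1 - S)‖ ≤ 2 * ‖x‖ * ‖P - 1 - S‖ := norm_mul_le₂ _ _
      _ ≤ 2 * b * ((n:ℝ)^2 * (1+2*b)^n * b^2) := by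
          have h0 := norm_nonneg x
          have h1 := norm_nonneg (P - 1 - S)
          nlinarith [mul_nonneg (mul_nonneg (sq_nonneg ((n:ℝ))) (by linarith : (0:ℝ) ≤ (1+2*b)^n)) (sq_nonneg b)]
    calc ‖(P - 1 - S) + x * S + x * (P - 1 - S)‖
        ≤ ‖P - 1 - S‖ + ‖x * S‖ + ‖x * (P - 1 - S)‖ := norm_add₃_le
      _ ≤ (n:ℝ)^2 * (1+2*b)^n * b^2 + 2*b*((n:ℝ)*b) + 2*b*((n:ℝ)^2 * (1+2*b)^n * b^2) := by linarith
      _ ≤ ((x::t).length : ℝ)^2 * (1+2*b)^(x::t).length * b^2 := by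
          simp only [List.length_cons, ← hn]
          push_cast
          rw [pow_succ (1+2*b) n]
          have hpq : (1:ℝ) ≤ (1+2*b)^n*(1+2*b) := by nlinarith
          have hkey : (0:ℝ) ≤ (2*(n:ℝ)+1)*((1+2*b)^n*(1+2*b)) - 2*(n:ℝ) := by
            nlinarith [mul_nonneg (by positivity : (0:ℝ) ≤ 2*(n:ℝ)+1) (by linarith : (0:ℝ) ≤ (1+2*b)^n*(1+2*b) - 1)]
          nlinarith [mul_nonneg (sq_nonneg b) hkey,
            mul_nonneg (mul_nonneg (sq_nonneg ((n:ℝ))) (by linarith : (0:ℝ) ≤ (1+2*b)^n)) (sq_nonneg b)]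

lemma L0_pow (j : ℕ) : (!![0,1;-1,2] : m2) ^ j = !![1-(j:ℝ), (j:ℝ); -(j:ℝ), 1+(j:ℝ)] := by
  induction j with
  | zero => rw [pow_zero, Matrix.one_fin_two]; norm_num
  | succ n ih =>
    rw [pow_succ, ih, Matrix.mul_fin_two]
    push_cast
    ext i k
    fin_cases i <;> fin_cases k <;> simp <;> ring

lemma Li0_pow (j : ℕ) : (!![2,-1;1,0] : m2) ^ j = !![1+(j:ℝ), -(j:ℝ); (j:ℝ), 1-(j:ℝ)] := by
  induction j with
  | zero => rw [pow_zero, Matrix.one_fin_two]; norm_num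
  | succ n ih =>
    rw [pow_succ, ih, Matrix.mul_fin_two]
    push_cast
    ext i k
    fin_cases i <;> fin_cases k <;> simp <;> ring

lemma Mj_eq (j : ℕ) (a b : ℝ) :
    (!![0,1;-1,2] : m2) ^ j * !![0,0; a - b, b] * (!![2,-1;1,0] : m2) ^ j
      = !![(j:ℝ)*((j:ℝ)+1)*a - (j:ℝ)*b, -(j:ℝ)^2*a + (j:ℝ)*b;
           ((j:ℝ)+1)^2*a - ((j:ℝ)+1)*b, -(j:ℝ)*((j:ℝ)+1)*a + ((j:ℝ)+1)*b] := by
  rw [L0_pow, Li0_pow, Matrix.mul_fin_two, Matrix.mul_fin_two]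
  ext i k
  fin_cases i <;> fin_cases k <;> simp <;> ring

lemma abs_theta {Ω2 μ e h g k ε : ℝ} (hΩ : 0 ≤ Ω2) (hμ : |μ| ≤ 1) (he : |e| ≤ ε)
    (hh : |h| ≤ ε) (hg : |g| ≤ ε) (hk : |k| ≤ ε) (hε : ε ≤ 1/2) :
    |Ω2*(h + h*g + g) - (Ω2+μ)*e + k + (μ-2)*k| ≤ (4*Ω2+5)*ε := by
  have hε0 : 0 ≤ ε := le_trans (abs_nonneg e) he
  have t1 : |h*g| ≤ ε := by
    rw [abs_mul]
    nlinarith [abs_nonneg h, abs_nonneg g]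
  have t2 : |h + h*g + g| ≤ 3*ε := by
    calc |h + h*g + g| ≤ |h + h*g| + |g| := abs_add_le _ _
    _ ≤ |h| + |h*g| + |g| := by linarith [abs_add_le h (h*g)]
    _ ≤ 3*ε := by linarith
  have t3 : |Ω2*(h+h*g+g)| ≤ Ω2*(3*ε) := by
    rw [abs_mul, abs_of_nonneg hΩ]
    exact mul_le_mul_of_nonneg_left t2 hΩ
  have t4 : |(Ω2+μ)*e| ≤ (Ω2+1)*ε := by
    rw [abs_mul]
    have h1 : |Ω2+μ| ≤ Ω2+1 := by
      rw [abs_le] at *; constructor <;> [linarith [hμ.1]; linarith [hμ.2]]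
    exact mul_le_mul h1 he (abs_nonneg e) (by linarith)
  have t5 : |k + (μ-2)*k| ≤ 3*ε := by
    have : k + (μ-2)*k = (μ-1)*k := by ring
    rw [this, abs_mul]
    have h1 : |μ-1| ≤ 3 := by rw [abs_le] at *; constructor <;> [linarith [hμ.1]; linarith [hμ.2]]
    nlinarith [abs_nonneg (μ-1)]
  calc |Ω2*(h + h*g + g) - (Ω2+μ)*e + k + (μ-2)*k|
      = |(Ω2*(h + h*g + g) - (Ω2+μ)*e) + (k + (μ-2)*k)| := by ring_nf
    _ ≤ |Ω2*(h + h*g + g) - (Ω2+μ)*e| + |k + (μ-2)*k| := abs_add_le _ _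
    _ ≤ |Ω2*(h + h*g + g)| + |(Ω2+μ)*e| + |k + (μ-2)*k| := by
        linarith [abs_sub (Ω2*(h+h*g+g)) ((Ω2+μ)*e)]
    _ ≤ (4*Ω2+5)*ε := by linarith

lemma abs_rho {Ω2 e h g ε k : ℝ} (hΩ : 0 ≤ Ω2) (he : |e| ≤ ε)
    (hh : |h| ≤ ε) (hg : |g| ≤ ε) (hk : |k| ≤ ε) :
    |Ω2*(h + g - e) - k| ≤ (4*Ω2+5)*ε := by
  have hε0 : 0 ≤ ε := le_trans (abs_nonneg e) he
  have t2 : |h + g - e| ≤ 3*ε := by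
    calc |h + g - e| ≤ |h + g| + |e| := abs_sub _ _
    _ ≤ |h| + |g| + |e| := by linarith [abs_add_le h g]
    _ ≤ 3*ε := by linarith
  have t3 : |Ω2*(h+g-e)| ≤ Ω2*(3*ε) := by
    rw [abs_mul, abs_of_nonneg hΩ]
    exact mul_le_mul_of_nonneg_left t2 hΩ
  calc |Ω2*(h + g - e) - k| ≤ |Ω2*(h+g-e)| + |k| := abs_sub _ _
  _ ≤ (4*Ω2+5)*ε := by nlinarith

lemma abs_E {Ω2 μ h g k e ε : ℝ} (hΩ : 0 ≤ Ω2) (hh : |h| ≤ ε) (hg : |g| ≤ ε)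
    (hk : |k| ≤ ε) (he : |e| ≤ ε) :
    |Ω2*(h*g) + μ*k - μ*e| ≤ (Ω2+2)*(ε^2 + ε * |μ|) := by
  have hε0 : 0 ≤ ε := le_trans (abs_nonneg h) hh
  have t1 : |Ω2*(h*g)| ≤ Ω2*ε^2 := by
    rw [abs_mul, abs_of_nonneg hΩ, abs_mul]
    have : |h| * |g| ≤ ε^2 := by nlinarith [abs_nonneg h, abs_nonneg g]
    exact mul_le_mul_of_nonneg_left this hΩ
  have t2 : |μ*k| ≤ |μ| * ε := by
    rw [abs_mul]; exact mul_le_mul_of_nonneg_left hk (abs_nonneg μ)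
  have t3 : |μ*e| ≤ |μ| * ε := by
    rw [abs_mul]; exact mul_le_mul_of_nonneg_left he (abs_nonneg μ)
  have habs : |Ω2*(h*g) + μ*k - μ*e| ≤ |Ω2*(h*g)| + |μ*k| + |μ*e| := by
    calc |Ω2*(h*g) + μ*k - μ*e| ≤ |Ω2*(h*g) + μ*k| + |μ*e| := abs_sub _ _
    _ ≤ |Ω2*(h*g)| + |μ*k| + |μ*e| := by linarith [abs_add_le (Ω2*(h*g)) (μ*k)]
  have hfin : Ω2*ε^2 + |μ| * ε + |μ| * ε ≤ (Ω2+2)*(ε^2 + ε * |μ|) := by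
    nlinarith [mul_nonneg hΩ (mul_nonneg hε0 (abs_nonneg μ)), sq_nonneg ε]
  linarith

end Aux

set_option maxHeartbeats 1600000 in
/-- Leading-order expansion A = I + M + O(ε̄² + ε̄|μ|) of the near-identity linear
transformation governing breather bifurcations in a Klein-Gordon chain with
finitely many small defects, in terms of algebraically-weighted averages of
the defect sequences. -/
theorem stmt_14 (n₀ : ℕ) (Ω : ℝ) (hΩ : 0 < Ω) :
    ∃ C > 0, ∀ (μ : ℝ) (em eta gam kap : ℤ → ℝ) (εbar : ℝ),
      |μ| ≤ 1 →
      (∀ n : ℤ, (n₀ : ℤ) < |n| → em n = 0 ∧ eta n = 0 ∧ gam n = 0 ∧ kap n = 0) →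
      (∀ n : ℤ, |em n| ≤ εbar ∧ |eta n| ≤ εbar ∧ |gam n| ≤ εbar ∧ |kap n| ≤ εbar) →
      εbar ≤ 1 / 2 →
      let θ : ℤ → ℝ := fun n =>
        Ω ^ 2 * (eta n + eta n * gam n + gam n) - (Ω ^ 2 + μ) * em n + kap n
      let T : ℤ → Matrix (Fin 2) (Fin 2) ℝ :=
        fun n => !![0, 0; θ n + (μ - 2) * kap n, kap n]
      let L : Matrix (Fin 2) (Fin 2) ℝ := !![0, 1; -1, 2 - μ]
      let A : Matrix (Fin 2) (Fin 2) ℝ :=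
        (((List.range (2 * n₀ + 1)).map fun j => (1 + T ((n₀ : ℤ) - j)) * L).prod) *
          L⁻¹ ^ (2 * n₀ + 1)
      let ρ : ℤ → ℝ := fun n => Ω ^ 2 * (eta n + gam n - em n)
      let M : Matrix (Fin 2) (Fin 2) ℝ :=
        !![∑ n ∈ Finset.range (2 * n₀ + 1),
             ((n : ℝ) * ((n : ℝ) + 1) * ρ ((n₀ : ℤ) - n) - (n : ℝ) * kap ((n₀ : ℤ) - n)),
           ∑ n ∈ Finset.range (2 * n₀ + 1),
             (-(n : ℝ) ^ 2 * ρ ((n₀ : ℤ) - n) + (n : ℝ) * kap ((n₀ : ℤ) - n));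
           ∑ n ∈ Finset.range (2 * n₀ + 1),
             (((n : ℝ) + 1) ^ 2 * ρ ((n₀ : ℤ) - n) - ((n : ℝ) + 1) * kap ((n₀ : ℤ) - n)),
           ∑ n ∈ Finset.range (2 * n₀ + 1),
             (-(n : ℝ) * ((n : ℝ) + 1) * ρ ((n₀ : ℤ) - n) + ((n : ℝ) + 1) * kap ((n₀ : ℤ) - n))]
      ‖A - 1 - M‖ ≤ C * (εbar ^ 2 + εbar * |μ|) := by
  set N : ℕ := 2 * n₀ + 1 with hN
  set cT : ℝ := 4*Ω^2+5 with hcT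
  set P : ℝ := (6:ℝ)^N with hP
  set K : ℝ := 4*cT*(P*P) with hK
  set cB : ℝ := 8*N*(P*P)*cT + 4*(P*P)*(Ω^2+2) with hcB
  have hcT1 : (1:ℝ) ≤ cT := by rw [hcT]; nlinarith [sq_nonneg Ω]
  have hcT0 : (0:ℝ) ≤ cT := by linarith
  have hP1 : (1:ℝ) ≤ P := by rw [hP]; exact one_le_pow₀ (by norm_num)
  have hP0 : (0:ℝ) ≤ P := by linarith
  have hK0 : (0:ℝ) ≤ K := by rw [hK]; positivity
  have hcB0 : (0:ℝ) ≤ cB := by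
    rw [hcB]; positivity
  refine ⟨(N:ℝ)^2*(1+K)^N*K^2 + N*cB + 1, ?_, ?_⟩
  · have h1 : (0:ℝ) ≤ (N:ℝ)^2*(1+K)^N*K^2 :=
      mul_nonneg (mul_nonneg (sq_nonneg _) (pow_nonneg (by linarith) _)) (sq_nonneg _)
    have h2 : (0:ℝ) ≤ (N:ℝ)*cB := mul_nonneg (Nat.cast_nonneg _) hcB0
    linarith
  intro μ em eta gam kap εbar hμ hsupp hbd hε
  intro θ T L A ρ M
  have hε0 : 0 ≤ εbar := le_trans (abs_nonneg _) (hbd 0).1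
  -- basic matrices
  set L₀ : m2 := !![0,1;-1,2] with hL₀
  set Li₀ : m2 := !![2,-1;1,0] with hLi₀
  set Li : m2 := !![2-μ, -1; 1, 0] with hLidef
  have hLdef : L = !![0,1;-1,2-μ] := rfl
  have hLLi : L * Li = 1 := by
    rw [hLdef, hLidef, Matrix.mul_fin_two, Matrix.one_fin_two]
    ext i k; fin_cases i <;> fin_cases k <;> simp <;> ring
  have hLiL : Li * L = 1 := by
    rw [hLdef, hLidef, Matrix.mul_fin_two, Matrix.one_fin_two]
    ext i k; fin_cases i <;> fin_cases k <;> simp <;> ring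
  have hLinv : L⁻¹ = Li := Matrix.inv_eq_right_inv hLLi
  set B : ℕ → m2 := fun j => L^j * T ((n₀:ℤ) - j) * Li^j with hB
  -- rewrite A
  have hA2 : A = ((List.range N).map (fun j => 1 + B j)).prod := by
    have h1 : A = (((List.range N).map fun j : ℕ => (1 + T ((n₀ : ℤ) - (j:ℤ))) * L).prod) * L⁻¹ ^ N := by
      unfold A
      simp only [bind_pure_comp, List.map_eq_map, List.map_map, Function.comp_def]
    rw [h1, hLinv, conj_prod L Li hLLi hLiL (fun j : ℕ => 1 + T ((n₀:ℤ) - (j:ℤ))) N]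
    have hfg : (fun j : ℕ => L^j * (1 + T ((n₀:ℤ) - (j:ℤ))) * Li^j) = fun j => 1 + B j := by
      funext j
      rw [mul_add, mul_one, add_mul, pow_mul_pow_inv L Li hLLi j, hB]
    rw [hfg]
  -- norm bounds on basic matrices
  have hμ' := abs_le.mp hμ
  have hLbd : ‖L‖ ≤ 3 := by
    rw [hLdef]
    refine norm_lit_le (by norm_num) (by norm_num) (by norm_num) (by norm_num) ?_
    rw [abs_le]; constructor <;> linarith [hμ'.1, hμ'.2]
  have hLibd : ‖Li‖ ≤ 3 := by
    rw [hLidef]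
    refine norm_lit_le (by norm_num) ?_ (by norm_num) (by norm_num) (by norm_num)
    rw [abs_le]; constructor <;> linarith [hμ'.1, hμ'.2]
  have hL₀bd : ‖L₀‖ ≤ 3 := by rw [hL₀]; refine norm_lit_le (by norm_num) (by norm_num) (by norm_num) (by norm_num) (by norm_num)
  have hLi₀bd : ‖Li₀‖ ≤ 3 := by rw [hLi₀]; refine norm_lit_le (by norm_num) (by norm_num) (by norm_num) (by norm_num) (by norm_num)
  have hLsub : ‖L - L₀‖ ≤ |μ| := by
    have e : L - L₀ = !![0,0;0,-μ] := by
      rw [hLdef, hL₀]; ext i k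
      fin_cases i <;> fin_cases k <;> simp [Matrix.sub_apply] <;> ring
    rw [e]
    refine norm_lit_le (abs_nonneg μ) (by simp) (by simp) (by simp) (by simp)
  have hLisub : ‖Li - Li₀‖ ≤ |μ| := by
    have e : Li - Li₀ = !![-μ,0;0,0] := by
      rw [hLidef, hLi₀]; ext i k
      fin_cases i <;> fin_cases k <;> simp [Matrix.sub_apply] <;> ring
    rw [e]
    refine norm_lit_le (abs_nonneg μ) (by simp) (by simp) (by simp) (by simp)
  -- norms of powers
  have hpow6 : ∀ j : ℕ, j < N → ‖L^j‖ ≤ P ∧ ‖Li^j‖ ≤ P ∧ ‖L₀^j‖ ≤ P ∧ ‖Li₀^j‖ ≤ P := by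
    intro j hj
    have h6 : ((2:ℝ)*3)^j ≤ P := by
      rw [hP]; norm_num
      exact pow_le_pow_right₀ (by norm_num) (le_of_lt hj)
    exact ⟨le_trans (norm_pow_le₂ (by norm_num) hLbd j) h6,
      le_trans (norm_pow_le₂ (by norm_num) hLibd j) h6,
      le_trans (norm_pow_le₂ (by norm_num) hL₀bd j) h6,
      le_trans (norm_pow_le₂ (by norm_num) hLi₀bd j) h6⟩
  have hpowsub : ∀ j : ℕ, j < N → ‖L^j - L₀^j‖ ≤ N*P * |μ| ∧ ‖Li^j - Li₀^j‖ ≤ N*P * |μ| := by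
    intro j hj
    have h6 : ((2:ℝ)*3)^j ≤ P := by
      rw [hP]; norm_num
      exact pow_le_pow_right₀ (by norm_num) (le_of_lt hj)
    have h60 : (0:ℝ) ≤ ((2:ℝ)*3)^j := by positivity
    have hjN : (j:ℝ) ≤ N := by exact_mod_cast le_of_lt hj
    have hj0 : (0:ℝ) ≤ (j:ℝ) := Nat.cast_nonneg j
    have h1 : (j:ℝ) * (2*3)^j ≤ (N:ℝ)*P := mul_le_mul hjN h6 h60 (Nat.cast_nonneg N)
    constructor
    · exact le_trans (norm_pow_sub_le₂ (by norm_num) hLbd hL₀bd hLsub j)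
        (mul_le_mul_of_nonneg_right h1 (abs_nonneg μ))
    · exact le_trans (norm_pow_sub_le₂ (by norm_num) hLibd hLi₀bd hLisub j)
        (mul_le_mul_of_nonneg_right h1 (abs_nonneg μ))
  -- norm bounds on T, T0, E
  have hTbd : ∀ n : ℤ, ‖T n‖ ≤ cT * εbar := by
    intro n
    have hTn : T n = !![0, 0; θ n + (μ - 2) * kap n, kap n] := rfl
    rw [hTn, hcT]
    refine norm_lit_le (by positivity) (by simpa using by positivity) (by simpa using by positivity) ?_ ?_
    · have hθn : θ n = Ω ^ 2 * (eta n + eta n * gam n + gam n) - (Ω ^ 2 + μ) * em n + kap n := rfl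
      rw [hθn]
      exact abs_theta (sq_nonneg Ω) hμ (hbd n).1 (hbd n).2.1 (hbd n).2.2.1 (hbd n).2.2.2 hε
    · calc |kap n| ≤ εbar := (hbd n).2.2.2
      _ ≤ (4*Ω^2+5)*εbar := by nlinarith [sq_nonneg Ω]
  set T0 : ℕ → m2 := fun j => !![0, 0; ρ ((n₀:ℤ)-j) - kap ((n₀:ℤ)-j), kap ((n₀:ℤ)-j)] with hT0
  have hT0bd : ∀ j : ℕ, ‖T0 j‖ ≤ cT * εbar := by
    intro j
    rw [hT0, hcT]
    refine norm_lit_le (by positivity) (by simpa using by positivity) (by simpa using by positivity) ?_ ?_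
    · have hρn : ρ ((n₀:ℤ)-j) = Ω ^ 2 * (eta ((n₀:ℤ)-j) + gam ((n₀:ℤ)-j) - em ((n₀:ℤ)-j)) := rfl
      rw [hρn]
      exact abs_rho (sq_nonneg Ω) (hbd _).1 (hbd _).2.1 (hbd _).2.2.1 (hbd _).2.2.2
    · calc |kap ((n₀:ℤ)-j)| ≤ εbar := (hbd _).2.2.2
      _ ≤ (4*Ω^2+5)*εbar := by nlinarith [sq_nonneg Ω]
  have hEbd : ∀ j : ℕ, ‖T ((n₀:ℤ)-j) - T0 j‖ ≤ (Ω^2+2)*(εbar^2 + εbar * |μ|) := by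
    intro j
    have hdiff : T ((n₀:ℤ)-j) - T0 j
        = !![0, 0; Ω^2*(eta ((n₀:ℤ)-j) * gam ((n₀:ℤ)-j)) + μ*kap ((n₀:ℤ)-j) - μ*em ((n₀:ℤ)-j), 0] := by
      have hTn : T ((n₀:ℤ)-j) = !![0, 0; θ ((n₀:ℤ)-j) + (μ - 2) * kap ((n₀:ℤ)-j), kap ((n₀:ℤ)-j)] := rfl
      have hθn : θ ((n₀:ℤ)-j) = Ω ^ 2 * (eta ((n₀:ℤ)-j) + eta ((n₀:ℤ)-j) * gam ((n₀:ℤ)-j) + gam ((n₀:ℤ)-j)) - (Ω ^ 2 + μ) * em ((n₀:ℤ)-j) + kap ((n₀:ℤ)-j) := rfl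
      have hρn : ρ ((n₀:ℤ)-j) = Ω ^ 2 * (eta ((n₀:ℤ)-j) + gam ((n₀:ℤ)-j) - em ((n₀:ℤ)-j)) := rfl
      rw [hTn, hT0]
      ext i k
      fin_cases i <;> fin_cases k <;> simp [Matrix.sub_apply] <;> rw [hθn, hρn] <;> ring
    rw [hdiff]
    have habs := abs_E (μ := μ) (sq_nonneg Ω) (hbd ((n₀:ℤ)-j)).2.1 (hbd ((n₀:ℤ)-j)).2.2.1
      (hbd ((n₀:ℤ)-j)).2.2.2 (hbd ((n₀:ℤ)-j)).1
    have hnn : (0:ℝ) ≤ (Ω^2+2)*(εbar^2 + εbar * |μ|) := by positivity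
    refine norm_lit_le hnn (by simpa using hnn) (by simpa using hnn) habs (by simpa using hnn)
  -- the explicit summand matrices
  set Mf : ℕ → m2 := fun j =>
    !![(j:ℝ)*((j:ℝ)+1)*ρ ((n₀:ℤ)-j) - (j:ℝ)*kap ((n₀:ℤ)-j),
       -(j:ℝ)^2*ρ ((n₀:ℤ)-j) + (j:ℝ)*kap ((n₀:ℤ)-j);
       ((j:ℝ)+1)^2*ρ ((n₀:ℤ)-j) - ((j:ℝ)+1)*kap ((n₀:ℤ)-j),
       -(j:ℝ)*((j:ℝ)+1)*ρ ((n₀:ℤ)-j) + ((j:ℝ)+1)*kap ((n₀:ℤ)-j)] with hMf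
  have hMfconj : ∀ j : ℕ, L₀^j * T0 j * Li₀^j = Mf j := by
    intro j
    rw [hL₀, hLi₀, hT0, hMf]
    exact Mj_eq j _ _
  have hMsum : M = ∑ j ∈ Finset.range N, Mf j := by
    have hMdef : M = !![∑ n ∈ Finset.range N,
             ((n : ℝ) * ((n : ℝ) + 1) * ρ ((n₀ : ℤ) - n) - (n : ℝ) * kap ((n₀ : ℤ) - n)),
           ∑ n ∈ Finset.range N,
             (-(n : ℝ) ^ 2 * ρ ((n₀ : ℤ) - n) + (n : ℝ) * kap ((n₀ : ℤ) - n));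
           ∑ n ∈ Finset.range N,
             (((n : ℝ) + 1) ^ 2 * ρ ((n₀ : ℤ) - n) - ((n : ℝ) + 1) * kap ((n₀ : ℤ) - n)),
           ∑ n ∈ Finset.range N,
             (-(n : ℝ) * ((n : ℝ) + 1) * ρ ((n₀ : ℤ) - n) + ((n : ℝ) + 1) * kap ((n₀ : ℤ) - n))] := rfl
    rw [hMdef, hMf]
    ext i k
    fin_cases i <;> fin_cases k <;> simp [Matrix.sum_apply]
  -- per-j bound on B j - Mf j
  have hBM : ∀ j : ℕ, j < N → ‖B j - Mf j‖ ≤ cB * (εbar^2 + εbar * |μ|) := by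
    intro j hj
    obtain ⟨hLp, hLip, hL0p, hLi0p⟩ := hpow6 j hj
    obtain ⟨hLs, hLis⟩ := hpowsub j hj
    have hid : B j - Mf j = (L^j - L₀^j) * T ((n₀:ℤ)-j) * Li^j
        + L₀^j * (T ((n₀:ℤ)-j) - T0 j) * Li^j + L₀^j * T0 j * (Li^j - Li₀^j) := by
      rw [hB, ← hMfconj j]
      noncomm_ring
    rw [hid]
    have t1 : ‖(L^j - L₀^j) * T ((n₀:ℤ)-j) * Li^j‖ ≤ 4*((N*P * |μ|) * (cT*εbar) * P) :=
      norm_mul3_le' hLs (hTbd _) hLip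
    have t2 : ‖L₀^j * (T ((n₀:ℤ)-j) - T0 j) * Li^j‖ ≤ 4*(P * ((Ω^2+2)*(εbar^2 + εbar * |μ|)) * P) :=
      norm_mul3_le' hL0p (hEbd j) hLip
    have t3 : ‖L₀^j * T0 j * (Li^j - Li₀^j)‖ ≤ 4*(P * (cT*εbar) * (N*P * |μ|)) :=
      norm_mul3_le' hL0p (hT0bd j) hLis
    refine le_trans norm_add₃_le ?_
    have hfin : 4*((N*P * |μ|) * (cT*εbar) * P) + 4*(P * ((Ω^2+2)*(εbar^2 + εbar * |μ|)) * P)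
        + 4*(P * (cT*εbar) * (N*P * |μ|)) ≤ cB * (εbar^2 + εbar * |μ|) := by
      rw [hcB]
      have hkey : (0:ℝ) ≤ 8*(N:ℝ)*(P*P)*cT*(εbar^2) :=
        by positivity
      nlinarith [hkey]
    linarith
  -- bound on B j itself
  have hBbd : ∀ j : ℕ, j < N → ‖B j‖ ≤ K * εbar := by
    intro j hj
    obtain ⟨hLp, hLip, _, _⟩ := hpow6 j hj
    have := norm_mul3_le' hLp (hTbd ((n₀:ℤ)-j)) hLip
    rw [hB]
    refine le_trans this ?_
    rw [hK]; ring_nf; nlinarith [sq_nonneg P]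
  -- assemble
  set l : List m2 := (List.range N).map B with hl
  have hlen : l.length = N := by rw [hl]; simp
  have hmem : ∀ x ∈ l, ‖x‖ ≤ K * εbar := by
    intro x hx
    rw [hl] at hx
    obtain ⟨j, hj, rfl⟩ := List.mem_map.mp hx
    exact hBbd j (List.mem_range.mp hj)
  have hprod := prod_expand (by positivity) l hmem
  rw [hlen] at hprod
  have hmapmap : l.map (fun x => 1 + x) = (List.range N).map (fun j => 1 + B j) := by
    rw [hl, List.map_map]; rfl
  rw [hmapmap, ← hA2] at hprod
  have hlsum : l.sum = ∑ j ∈ Finset.range N, B j := by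
    rw [hl]; rfl
  rw [hlsum] at hprod
  have hsumdiff : ‖(∑ j ∈ Finset.range N, B j) - M‖ ≤ N * (cB * (εbar^2 + εbar * |μ|)) := by
    rw [hMsum, ← Finset.sum_sub_distrib]
    refine le_trans (norm_sum_le _ _) ?_
    calc ∑ j ∈ Finset.range N, ‖B j - Mf j‖
        ≤ ∑ j ∈ Finset.range N, cB * (εbar^2 + εbar * |μ|) :=
          Finset.sum_le_sum (fun j hj => hBM j (Finset.mem_range.mp hj))
      _ = N * (cB * (εbar^2 + εbar * |μ|)) := by
          rw [Finset.sum_const, Finset.card_range, nsmul_eq_mul]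
  have hsplit : A - 1 - M = (A - 1 - ∑ j ∈ Finset.range N, B j)
      + ((∑ j ∈ Finset.range N, B j) - M) := by abel
  rw [hsplit]
  refine le_trans (norm_add_le _ _) ?_
  have hfirst : ‖A - 1 - ∑ j ∈ Finset.range N, B j‖ ≤ (N:ℝ)^2 * (1+K)^N * (K*εbar)^2 := by
    refine le_trans hprod ?_
    have hpowle : (1 + 2*(K*εbar))^N ≤ (1+K)^N := by
      refine pow_le_pow_left₀ (by positivity) ?_ N
      nlinarith
    have hKε : (0:ℝ) ≤ (K*εbar)^2 := sq_nonneg _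
    have hN2 : (0:ℝ) ≤ (N:ℝ)^2 := sq_nonneg _
    nlinarith [mul_nonneg hN2 hKε]
  have hsq : (K*εbar)^2 = K^2 * εbar^2 := by ring
  have hnn1 : (0:ℝ) ≤ (N:ℝ)^2*(1+K)^N*K^2 :=
    mul_nonneg (mul_nonneg (sq_nonneg _) (pow_nonneg (by linarith) _)) (sq_nonneg _)
  have hnn2 : (0:ℝ) ≤ εbar * |μ| := mul_nonneg hε0 (abs_nonneg μ)
  have hnn3 : (0:ℝ) ≤ εbar^2 + εbar * |μ| := by positivity
  calc ‖A - 1 - ∑ j ∈ Finset.range N, B j‖ + ‖(∑ j ∈ Finset.range N, B j) - M‖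
      ≤ (N:ℝ)^2 * (1+K)^N * (K*εbar)^2 + N * (cB * (εbar^2 + εbar * |μ|)) := by linarith
    _ ≤ ((N:ℝ)^2*(1+K)^N*K^2 + N*cB + 1) * (εbar^2 + εbar * |μ|) := by
        rw [hsq]
        nlinarith [mul_nonneg hnn1 hnn2]
end
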